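/- arXiv:1908.01084 — 3 statements merged into one kernel-verified Lean document; each statement's English description precedes it below -/
import Mathlib

section
/- For every integer n ≥ 1 and all real numbers q, r, x, t with (1+x)(x+t)(1+xt) ≠ 0, one has Σ_{σ∈S_n(321)} q^{cros σ} (tq)^{exc σ} r^{fix σ} = ((1+xt)/(1+x))^{n} · Σ_{σ∈S_n(321)} q^{cros σ} · ((1+x)² t/((x+t)(1+xt)))^{cpk σ} · (q(x+t)/(1+xt))^{exc σ} · ((1+x)r/(1+xt))^{fix σ}. -/
open Finset

open scoped Classical

noncomputable section

namespace EulerExc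

variable {n : ℕ}

/-- 1-based value of `σ` at position `k ∈ [1,n]`, with boundary convention
`σ(0) = σ(n+1) = 0` outside. -/
def sv (σ : Equiv.Perm (Fin n)) (k : ℕ) : ℕ :=
  if h : 1 ≤ k ∧ k ≤ n then ((σ ⟨k - 1, by omega⟩ : Fin n) : ℕ) + 1 else 0

/-- 1-based value with boundary convention `σ(0) = 0`, `σ(n+1) = ∞`. -/
def svInf (σ : Equiv.Perm (Fin n)) (k : ℕ) : ℕ :=
  if k = 0 then 0 else if k ≤ n then sv σ k else n + 1

/-- number of excedances -/
def exc (σ : Equiv.Perm (Fin n)) : ℕ := (univ.filter fun i : Fin n => i < σ i).card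

/-- number of fixed points -/
def fixc (σ : Equiv.Perm (Fin n)) : ℕ := (univ.filter fun i : Fin n => σ i = i).card

/-- number of drops -/
def dropc (σ : Equiv.Perm (Fin n)) : ℕ := (univ.filter fun i : Fin n => σ i < i).card

/-- number of inversions -/
def inv (σ : Equiv.Perm (Fin n)) : ℕ :=
  (univ.filter fun p : Fin n × Fin n => p.1 < p.2 ∧ σ p.2 < σ p.1).card

/-- number of descents -/
def des (σ : Equiv.Perm (Fin n)) : ℕ :=
  ((Icc 1 (n - 1)).filter fun i => sv σ (i + 1) < sv σ i).card

/-- number of ascents -/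
def asc (σ : Equiv.Perm (Fin n)) : ℕ :=
  ((Icc 1 (n - 1)).filter fun i => sv σ i < sv σ (i + 1)).card

/-- crossing number: pairs `(i,j)` with `j < i < σ(j) < σ(i)` or `σ(i) < σ(j) ≤ i < j` -/
def cros (σ : Equiv.Perm (Fin n)) : ℕ :=
  (univ.filter fun p : Fin n × Fin n =>
    (p.2 < p.1 ∧ p.1 < σ p.2 ∧ σ p.2 < σ p.1) ∨
    (σ p.1 < σ p.2 ∧ σ p.2 ≤ p.1 ∧ p.1 < p.2)).card

/-- nesting number: pairs `(i,j)` with `j < i < σ(i) < σ(j)` or `σ(j) < σ(i) ≤ i < j` -/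
def nest (σ : Equiv.Perm (Fin n)) : ℕ :=
  (univ.filter fun p : Fin n × Fin n =>
    (p.2 < p.1 ∧ p.1 < σ p.1 ∧ σ p.1 < σ p.2) ∨
    (σ p.2 < σ p.1 ∧ σ p.1 ≤ p.1 ∧ p.1 < p.2)).card

def icr (σ : Equiv.Perm (Fin n)) : ℕ := cros σ⁻¹

/-- number of cyclic peaks -/
def cpk (σ : Equiv.Perm (Fin n)) : ℕ :=
  (univ.filter fun x : Fin n => σ⁻¹ x < x ∧ σ x < x).card

/-- number of cyclic valleys -/
def cval (σ : Equiv.Perm (Fin n)) : ℕ :=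
  (univ.filter fun x : Fin n => x < σ⁻¹ x ∧ x < σ x).card

/-- number of double excedances -/
def cda (σ : Equiv.Perm (Fin n)) : ℕ :=
  (univ.filter fun x : Fin n => σ⁻¹ x < x ∧ x < σ x).card

/-- number of double drops -/
def cdd (σ : Equiv.Perm (Fin n)) : ℕ :=
  (univ.filter fun x : Fin n => x < σ⁻¹ x ∧ σ x < x).card

/-- number of cycles (including fixed points) -/
def cyc (σ : Equiv.Perm (Fin n)) : ℕ := σ.cycleType.card + fixc σ

/-- the star companion `σ*` of `σ`: a permutation of `{0,1,…,n}` with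
`σ*(0) = n` and `σ*(i) = σ(i) - 1` for `i ∈ [n]`. -/
def star (σ : Equiv.Perm (Fin n)) : Equiv.Perm (Fin (n + 1)) :=
  (Equiv.Perm.decomposeFin.symm (0, σ)).trans (Equiv.subRight (1 : Fin (n + 1)))

def cpkStar (σ : Equiv.Perm (Fin n)) : ℕ :=
  (univ.filter fun i : Fin (n + 1) =>
    1 ≤ (i : ℕ) ∧ (i : ℕ) < n ∧ (star σ)⁻¹ i < i ∧ star σ i < i).card

def cdaStar (σ : Equiv.Perm (Fin n)) : ℕ :=
  (univ.filter fun i : Fin (n + 1) =>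
    1 ≤ (i : ℕ) ∧ (i : ℕ) < n ∧ (star σ)⁻¹ i < i ∧ i < star σ i).card

def cddStar (σ : Equiv.Perm (Fin n)) : ℕ :=
  (univ.filter fun i : Fin (n + 1) =>
    1 ≤ (i : ℕ) ∧ (i : ℕ) < n ∧ i < (star σ)⁻¹ i ∧ star σ i < i).card

def fixStar (σ : Equiv.Perm (Fin n)) : ℕ :=
  (univ.filter fun i : Fin (n + 1) =>
    1 ≤ (i : ℕ) ∧ (i : ℕ) < n ∧ star σ i = i).card

def cycStar (σ : Equiv.Perm (Fin n)) : ℕ := cyc (star σ)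

/-- number of occurrences of the vincular pattern 31-2 -/
def p31_2 (σ : Equiv.Perm (Fin n)) : ℕ :=
  ((Icc 1 n ×ˢ Icc 1 n).filter fun p =>
    p.1 + 1 < p.2 ∧ sv σ (p.1 + 1) < sv σ p.2 ∧ sv σ p.2 < sv σ p.1).card

/-- number of occurrences of the vincular pattern 2-13 -/
def p2_13 (σ : Equiv.Perm (Fin n)) : ℕ :=
  ((Icc 1 n ×ˢ Icc 1 n).filter fun p =>
    p.2 < p.1 ∧ p.1 < n ∧ sv σ p.1 < sv σ p.2 ∧ sv σ p.2 < sv σ (p.1 + 1)).card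

/-- number of occurrences of the vincular pattern 2-31 -/
def p2_31 (σ : Equiv.Perm (Fin n)) : ℕ :=
  ((Icc 1 n ×ˢ Icc 1 n).filter fun p =>
    p.2 < p.1 ∧ p.1 < n ∧ sv σ (p.1 + 1) < sv σ p.2 ∧ sv σ p.2 < sv σ p.1).card

/-- number of peaks (convention 0--0) -/
def pk (σ : Equiv.Perm (Fin n)) : ℕ :=
  ((Icc 1 n).filter fun i => sv σ (i - 1) < sv σ i ∧ sv σ (i + 1) < sv σ i).card

/-- number of valleys (convention 0--0) -/
def vall (σ : Equiv.Perm (Fin n)) : ℕ :=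
  ((Icc 1 n).filter fun i => sv σ i < sv σ (i - 1) ∧ sv σ i < sv σ (i + 1)).card

/-- number of double ascents (convention 0--0) -/
def da (σ : Equiv.Perm (Fin n)) : ℕ :=
  ((Icc 1 n).filter fun i => sv σ (i - 1) < sv σ i ∧ sv σ i < sv σ (i + 1)).card

/-- number of double descents (convention 0--0) -/
def dd (σ : Equiv.Perm (Fin n)) : ℕ :=
  ((Icc 1 n).filter fun i => sv σ i < sv σ (i - 1) ∧ sv σ (i + 1) < sv σ i).card

/-- number of peaks (convention 0--∞) -/
def lpk (σ : Equiv.Perm (Fin n)) : ℕ :=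
  ((Icc 1 n).filter fun i => svInf σ (i - 1) < svInf σ i ∧ svInf σ (i + 1) < svInf σ i).card

/-- number of valleys (convention 0--∞) -/
def lval (σ : Equiv.Perm (Fin n)) : ℕ :=
  ((Icc 1 n).filter fun i => svInf σ i < svInf σ (i - 1) ∧ svInf σ i < svInf σ (i + 1)).card

/-- number of double ascents (convention 0--∞) -/
def lda (σ : Equiv.Perm (Fin n)) : ℕ :=
  ((Icc 1 n).filter fun i => svInf σ (i - 1) < svInf σ i ∧ svInf σ i < svInf σ (i + 1)).card

/-- number of double descents (convention 0--∞) -/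
def ldd (σ : Equiv.Perm (Fin n)) : ℕ :=
  ((Icc 1 n).filter fun i => svInf σ i < svInf σ (i - 1) ∧ svInf σ (i + 1) < svInf σ i).card

/-- number of foremaxima: double ascents (convention 0--∞) that are
left-to-right maxima -/
def fmax (σ : Equiv.Perm (Fin n)) : ℕ :=
  ((Icc 1 n).filter fun i =>
    svInf σ (i - 1) < svInf σ i ∧ svInf σ i < svInf σ (i + 1) ∧
    ∀ j ∈ Icc 1 i, sv σ j ≤ sv σ i).card

/-- `scda σ = #{i ∈ [n-1] : i < σ(i) and i+1 > σ⁻¹(i+1)}` -/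
def scda (σ : Equiv.Perm (Fin n)) : ℕ :=
  ((Icc 1 (n - 1)).filter fun i => i < sv σ i ∧ sv σ⁻¹ (i + 1) < i + 1).card

/-- `σ` avoids the pattern 321 -/
def Avoids321 (σ : Equiv.Perm (Fin n)) : Prop :=
  ¬ ∃ i j k : Fin n, i < j ∧ j < k ∧ σ k < σ j ∧ σ j < σ i

/-- `σ` avoids the pattern 231 -/
def Avoids231 (σ : Equiv.Perm (Fin n)) : Prop :=
  ¬ ∃ i j k : Fin n, i < j ∧ j < k ∧ σ k < σ i ∧ σ i < σ j

/-- `σ` avoids the pattern 312 -/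
def Avoids312 (σ : Equiv.Perm (Fin n)) : Prop :=
  ¬ ∃ i j k : Fin n, i < j ∧ j < k ∧ σ j < σ k ∧ σ k < σ i

/-- `σ` avoids the pattern 213 -/
def Avoids213 (σ : Equiv.Perm (Fin n)) : Prop :=
  ¬ ∃ i j k : Fin n, i < j ∧ j < k ∧ σ j < σ i ∧ σ i < σ k

/-- `σ` avoids the pattern 132 -/
def Avoids132 (σ : Equiv.Perm (Fin n)) : Prop :=
  ¬ ∃ i j k : Fin n, i < j ∧ j < k ∧ σ i < σ k ∧ σ k < σ j

/-- `σ` is a derangement -/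
def IsDerangement (σ : Equiv.Perm (Fin n)) : Prop := ∀ i, σ i ≠ i

/-! Signed permutations `B_n`, encoded as a pair `(σ, ε)` of an ordinary
permutation (the absolute value) together with signs attached to positions. -/

/-- number of negative values -/
def negB (ε : Fin n → Bool) : ℕ := (univ.filter fun i => ε i = true).card

/-- number of type B excedances, w.r.t. the friends order -/
def excB (σ : Equiv.Perm (Fin n)) (ε : Fin n → Bool) : ℕ :=
  (univ.filter fun i : Fin n => i < σ i ∨ (σ i = i ∧ ε i = true)).card

/-- the (1-based, signed, integer) value of the signed permutation `(σ, ε)` at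
position `k ∈ [1,n]`, with `0` outside. -/
def signedVal (σ : Equiv.Perm (Fin n)) (ε : Fin n → Bool) (k : ℕ) : ℤ :=
  if h : 1 ≤ k ∧ k ≤ n then
    (if ε ⟨k - 1, by omega⟩ then -(((σ ⟨k - 1, by omega⟩ : Fin n) : ℕ) + 1 : ℤ)
     else (((σ ⟨k - 1, by omega⟩ : Fin n) : ℕ) + 1 : ℤ))
  else 0

/-- number of type B descents -/
def desB (σ : Equiv.Perm (Fin n)) (ε : Fin n → Bool) : ℕ :=
  ((range n).filter fun i => signedVal σ ε (i + 1) < signedVal σ ε i).card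


namespace PV

variable {n : ℕ}

def cle (P : Finset (Fin n)) (a : Fin n) : ℕ := (P.filter (fun x => x ≤ a)).card
def clt (P : Finset (Fin n)) (a : Fin n) : ℕ := (P.filter (fun x => x < a)).card

lemma clt_le_cle (P : Finset (Fin n)) (a : Fin n) : clt P a ≤ cle P a := by
  apply card_le_card; intro x hx; simp only [mem_filter] at *; exact ⟨hx.1, hx.2.le⟩

lemma cle_eq (P : Finset (Fin n)) (a : Fin n) :
    cle P a = clt P a + (if a ∈ P then 1 else 0) := by
  unfold cle clt
  have h1 : P.filter (fun x => x ≤ a) = P.filter (fun x => x < a ∨ x = a) := by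
    apply filter_congr; intro x _; simp [le_iff_lt_or_eq]
  rw [h1, filter_or, card_union_of_disjoint, Finset.filter_eq']
  · by_cases h : a ∈ P <;> simp [h]
  · rw [Finset.disjoint_left]
    intro x hx hx'
    rw [mem_filter] at hx hx'
    exact absurd (hx'.2 ▸ hx.2) (lt_irrefl a)

lemma clt_mono (P : Finset (Fin n)) {a b : Fin n} (h : a ≤ b) : clt P a ≤ clt P b := by
  apply card_le_card; intro x hx; simp only [mem_filter] at *
  exact ⟨hx.1, lt_of_lt_of_le hx.2 h⟩

lemma cle_mono (P : Finset (Fin n)) {a b : Fin n} (h : a ≤ b) : cle P a ≤ cle P b := by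
  apply card_le_card; intro x hx; simp only [mem_filter] at *
  exact ⟨hx.1, le_trans hx.2 h⟩

lemma cle_le_clt (P : Finset (Fin n)) {a b : Fin n} (h : a < b) : cle P a ≤ clt P b := by
  apply card_le_card; intro x hx; simp only [mem_filter] at *
  exact ⟨hx.1, lt_of_le_of_lt hx.2 h⟩

lemma clt_add_compl (P : Finset (Fin n)) (a : Fin n) : clt P a + clt Pᶜ a = a.val := by
  unfold clt
  rw [← card_union_of_disjoint, ← filter_union, union_compl]
  · have h : (univ : Finset (Fin n)).filter (fun x => x < a) = Finset.Iio a := by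
      ext x; simp
    rw [h, Fin.card_Iio]
  · exact disjoint_filter_filter disjoint_compl_right

lemma cle_add_compl (P : Finset (Fin n)) (a : Fin n) : cle P a + cle Pᶜ a = a.val + 1 := by
  unfold cle
  rw [← card_union_of_disjoint, ← filter_union, union_compl]
  · have h : (univ : Finset (Fin n)).filter (fun x => x ≤ a) = Finset.Iic a := by
      ext x; simp
    rw [h, Fin.card_Iic]
  · exact disjoint_filter_filter disjoint_compl_right

lemma clt_lt_card {P : Finset (Fin n)} {a : Fin n} (h : a ∈ P) : clt P a < P.card := by
  apply card_lt_card
  constructor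
  · exact filter_subset _ _
  · intro hsub
    have := hsub h
    simp at this

lemma sum_cle (P : Finset (Fin n)) :
    ∑ a : Fin n, cle P a = (∑ a : Fin n, clt P a) + P.card := by
  have h : ∀ a : Fin n, cle P a = clt P a + (if a ∈ P then 1 else 0) := cle_eq P
  rw [Finset.sum_congr rfl (fun a _ => h a), Finset.sum_add_distrib]
  congr 1
  rw [Finset.sum_boole]
  simp

def embAt (P : Finset (Fin n)) (m : ℕ) (h : m < P.card) : Fin n :=
  P.orderEmbOfFin rfl ⟨m, h⟩

lemma embAt_mem (P : Finset (Fin n)) (m : ℕ) (h : m < P.card) : embAt P m h ∈ P :=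
  Finset.orderEmbOfFin_mem P rfl ⟨m, h⟩

lemma embAt_strictMono (P : Finset (Fin n)) {m1 m2 : ℕ} (h1 : m1 < P.card) (h2 : m2 < P.card)
    (h : m1 < m2) : embAt P m1 h1 < embAt P m2 h2 := by
  exact (P.orderEmbOfFin rfl).strictMono (show (⟨m1,h1⟩ : Fin P.card) < ⟨m2,h2⟩ from h)

lemma embAt_inj (P : Finset (Fin n)) {m1 m2 : ℕ} (h1 : m1 < P.card) (h2 : m2 < P.card)
    (h : embAt P m1 h1 = embAt P m2 h2) : m1 = m2 := by
  rcases lt_trichotomy m1 m2 with hc | hc | hc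
  · exact absurd h (ne_of_lt (embAt_strictMono P h1 h2 hc))
  · exact hc
  · exact absurd h.symm (ne_of_lt (embAt_strictMono P h2 h1 hc))

lemma exists_embAt {P : Finset (Fin n)} {x : Fin n} (hx : x ∈ P) :
    ∃ m, ∃ h : m < P.card, embAt P m h = x := by
  have : x ∈ Set.range (P.orderEmbOfFin rfl) := by
    rw [Finset.range_orderEmbOfFin]; exact hx
  obtain ⟨⟨m, hm⟩, h⟩ := this
  exact ⟨m, hm, h⟩

lemma embAt_le_of_le (P : Finset (Fin n)) {m1 m2 : ℕ} (h1 : m1 < P.card) (h2 : m2 < P.card)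
    (h : m1 ≤ m2) : embAt P m1 h1 ≤ embAt P m2 h2 := by
  rcases lt_or_eq_of_le h with hc | hc
  · exact (embAt_strictMono P h1 h2 hc).le
  · subst hc; exact le_refl _

lemma clt_embAt (P : Finset (Fin n)) (m : ℕ) (h : m < P.card) :
    clt P (embAt P m h) = m := by
  apply le_antisymm
  · -- every element of the filter is embAt m' with m' < m
    unfold clt
    have : P.filter (fun x => x < embAt P m h) ⊆ (Finset.range m).image
        (fun m' => if h' : m' < P.card then embAt P m' h' else embAt P m h) := by
      intro x hx
      rw [mem_filter] at hx
      obtain ⟨m', hm', hx'⟩ := exists_embAt hx.1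
      rw [mem_image]
      refine ⟨m', ?_, by rw [dif_pos hm']; exact hx'⟩
      rw [Finset.mem_range]
      by_contra hge
      push_neg at hge
      exact absurd (hx' ▸ hx.2) (not_lt.mpr (embAt_le_of_le P h hm' hge))
    calc (P.filter (fun x => x < embAt P m h)).card ≤ _ := card_le_card this
      _ ≤ (Finset.range m).card := card_image_le
      _ = m := by rw [Finset.card_range]
  · -- range m injects into the filter
    unfold clt
    have : (Finset.range m).image
        (fun m' => if h' : m' < P.card then embAt P m' h' else embAt P m h)
        ⊆ P.filter (fun x => x < embAt P m h) := by
      intro x hx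
      rw [mem_image] at hx
      obtain ⟨m', hm', hx'⟩ := hx
      rw [Finset.mem_range] at hm'
      have hm'c : m' < P.card := lt_trans hm' h
      rw [dif_pos hm'c] at hx'
      rw [mem_filter, ← hx']
      exact ⟨embAt_mem P m' hm'c, embAt_strictMono P hm'c h hm'⟩
    calc m = (Finset.range m).card := (Finset.card_range m).symm
      _ = ((Finset.range m).image
          (fun m' => if h' : m' < P.card then embAt P m' h' else embAt P m h)).card := by
          rw [Finset.card_image_of_injOn]
          intro a ha b hb hab
          rw [Finset.mem_coe, Finset.mem_range] at ha hb
          simp only at hab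
          rw [dif_pos (lt_trans ha h), dif_pos (lt_trans hb h)] at hab
          exact embAt_inj P _ _ hab
      _ ≤ _ := card_le_card this

lemma embAt_clt {P : Finset (Fin n)} {x : Fin n} (hx : x ∈ P) (h : clt P x < P.card) :
    embAt P (clt P x) h = x := by
  obtain ⟨m, hm, he⟩ := exists_embAt hx
  have hq : clt P x = m := by rw [← he, clt_embAt]
  subst hq
  exact he

lemma embAt_congr (P : Finset (Fin n)) {m1 m2 : ℕ} (h : m1 = m2) (h1 : m1 < P.card)
    (h2 : m2 < P.card) : embAt P m1 h1 = embAt P m2 h2 := by subst h; rfl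

lemma embAt_lt_iff (P : Finset (Fin n)) (m : ℕ) (h : m < P.card) (a : Fin n) :
    embAt P m h < a ↔ m < clt P a := by
  constructor
  · intro hlt
    have h1 : clt P (embAt P m h) = m := clt_embAt P m h
    have h2 : cle P (embAt P m h) ≤ clt P a := cle_le_clt P hlt
    rw [cle_eq, if_pos (embAt_mem P m h), h1] at h2
    omega
  · intro hlt
    by_contra hge
    push_neg at hge
    have := clt_mono P hge
    rw [clt_embAt] at this
    omega

lemma embAt_le_iff (P : Finset (Fin n)) (m : ℕ) (h : m < P.card) (a : Fin n) :
    embAt P m h ≤ a ↔ m < cle P a := by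
  constructor
  · intro hle
    have h2 : cle P (embAt P m h) ≤ cle P a := cle_mono P hle
    rw [cle_eq, if_pos (embAt_mem P m h), clt_embAt] at h2
    omega
  · intro hlt
    by_contra hge
    push_neg at hge
    have := cle_le_clt P hge
    rw [clt_embAt] at this
    omega


def Dm (P V : Finset (Fin n)) : Prop :=
  P.card = V.card ∧ ∀ a, cle V a ≤ clt P a

lemma compl_card_eq {P V : Finset (Fin n)} (h : P.card = V.card) : Pᶜ.card = Vᶜ.card := by
  rw [card_compl, card_compl, h]

def pvF (P V : Finset (Fin n)) (hc : P.card = V.card) (i : Fin n) : Fin n :=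
  if h : i ∈ P then embAt V (clt P i) (by rw [← hc]; exact clt_lt_card h)
  else embAt Vᶜ (clt Pᶜ i)
    (by rw [← compl_card_eq hc]; exact clt_lt_card (Finset.mem_compl.mpr h))

lemma pvF_of_mem {P V : Finset (Fin n)} (hc : P.card = V.card) {i : Fin n} (h : i ∈ P) :
    pvF P V hc i = embAt V (clt P i) (by rw [← hc]; exact clt_lt_card h) := by
  unfold pvF; rw [dif_pos h]

lemma pvF_of_not_mem {P V : Finset (Fin n)} (hc : P.card = V.card) {i : Fin n} (h : i ∉ P) :
    pvF P V hc i = embAt Vᶜ (clt Pᶜ i)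
      (by rw [← compl_card_eq hc]; exact clt_lt_card (Finset.mem_compl.mpr h)) := by
  unfold pvF; rw [dif_neg h]

lemma pvF_leftInv (P V : Finset (Fin n)) (hc : P.card = V.card) (i : Fin n) :
    pvF V P hc.symm (pvF P V hc i) = i := by
  by_cases h : i ∈ P
  · rw [pvF_of_mem hc h]
    have hv : embAt V (clt P i) (by rw [← hc]; exact clt_lt_card h) ∈ V := embAt_mem _ _ _
    rw [pvF_of_mem hc.symm hv]
    have h1 : clt V (embAt V (clt P i) (by rw [← hc]; exact clt_lt_card h)) = clt P i :=
      clt_embAt _ _ _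
    have h2 : embAt P (clt V (embAt V (clt P i) (by rw [← hc]; exact clt_lt_card h)))
        (by rw [h1]; exact clt_lt_card h) = embAt P (clt P i) (clt_lt_card h) := by
      congr 1
    rw [h2, embAt_clt h]
  · rw [pvF_of_not_mem hc h]
    have hv : embAt Vᶜ (clt Pᶜ i)
        (by rw [← compl_card_eq hc]; exact clt_lt_card (Finset.mem_compl.mpr h)) ∈ Vᶜ :=
      embAt_mem _ _ _
    have hv' : embAt Vᶜ (clt Pᶜ i)
        (by rw [← compl_card_eq hc]; exact clt_lt_card (Finset.mem_compl.mpr h)) ∉ V :=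
      Finset.mem_compl.mp hv
    rw [pvF_of_not_mem hc.symm hv']
    have hlt : clt Pᶜ i < Vᶜ.card := by
      rw [← compl_card_eq hc]; exact clt_lt_card (Finset.mem_compl.mpr h)
    have h1 : clt Vᶜ (embAt Vᶜ (clt Pᶜ i) hlt) = clt Pᶜ i := clt_embAt _ _ _
    have h2 : embAt Pᶜ (clt Vᶜ (embAt Vᶜ (clt Pᶜ i)
          (by rw [← compl_card_eq hc]; exact clt_lt_card (Finset.mem_compl.mpr h))))
        (by rw [h1]; exact clt_lt_card (Finset.mem_compl.mpr h))
        = embAt Pᶜ (clt Pᶜ i) (clt_lt_card (Finset.mem_compl.mpr h)) := by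
      congr 1
    rw [h2, embAt_clt (Finset.mem_compl.mpr h)]

def pvPerm (P V : Finset (Fin n)) (hc : P.card = V.card) : Equiv.Perm (Fin n) :=
  ⟨pvF P V hc, pvF V P hc.symm, pvF_leftInv P V hc, pvF_leftInv V P hc.symm⟩

lemma pvPerm_apply (P V : Finset (Fin n)) (hc : P.card = V.card) (i : Fin n) :
    pvPerm P V hc i = pvF P V hc i := rfl

lemma pvPerm_inv (P V : Finset (Fin n)) (hc : P.card = V.card) :
    (pvPerm P V hc)⁻¹ = pvPerm V P hc.symm := rfl

lemma pvF_embAt (P V : Finset (Fin n)) (hc : P.card = V.card) (m : ℕ) (h : m < P.card) :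
    pvF P V hc (embAt P m h) = embAt V m (hc ▸ h) := by
  rw [pvF_of_mem hc (embAt_mem P m h)]
  congr 1
  exact clt_embAt P m h

lemma pvF_embAt_compl (P V : Finset (Fin n)) (hc : P.card = V.card) (m : ℕ)
    (h : m < Pᶜ.card) :
    pvF P V hc (embAt Pᶜ m h) = embAt Vᶜ m (compl_card_eq hc ▸ h) := by
  have hmem : embAt Pᶜ m h ∉ P := Finset.mem_compl.mp (embAt_mem Pᶜ m h)
  rw [pvF_of_not_mem hc hmem]
  congr 1
  exact clt_embAt Pᶜ m h

lemma Dm.clt_lt_of_mem {P V : Finset (Fin n)} (hd : Dm P V) {x : Fin n} (hx : x ∈ V) :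
    clt V x < clt P x := by
  have := hd.2 x
  rw [cle_eq, if_pos hx] at this
  omega

lemma Dm.compl_cle {P V : Finset (Fin n)} (hd : Dm P V) (a : Fin n) :
    cle Pᶜ a ≤ cle Vᶜ a := by
  have h1 := cle_add_compl P a
  have h2 := cle_add_compl V a
  have h3 := hd.2 a
  have h4 := clt_le_cle P a
  omega

lemma Dm.embAt_lt {P V : Finset (Fin n)} (hd : Dm P V) (m : ℕ) (h : m < P.card)
    (h' : m < V.card) : embAt P m h < embAt V m h' := by
  rw [embAt_lt_iff]
  have h1 : clt V (embAt V m h') = m := clt_embAt V m h'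
  have := hd.clt_lt_of_mem (embAt_mem V m h')
  omega

lemma Dm.compl_embAt_le {P V : Finset (Fin n)} (hd : Dm P V) (m : ℕ) (h : m < Vᶜ.card)
    (h' : m < Pᶜ.card) : embAt Vᶜ m h ≤ embAt Pᶜ m h' := by
  rw [embAt_le_iff]
  have h1 : clt Pᶜ (embAt Pᶜ m h') = m := clt_embAt Pᶜ m h'
  have h2 : cle Pᶜ (embAt Pᶜ m h') = m + 1 := by
    rw [cle_eq, if_pos (embAt_mem Pᶜ m h'), h1]
  have := hd.compl_cle (embAt Pᶜ m h')
  omega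

lemma Dm.lt_pvF {P V : Finset (Fin n)} (hd : Dm P V) (hc : P.card = V.card) {i : Fin n}
    (hi : i ∈ P) : i < pvF P V hc i := by
  rw [pvF_of_mem hc hi]
  have h1 : embAt P (clt P i) (clt_lt_card hi) = i := embAt_clt hi _
  calc i = embAt P (clt P i) (clt_lt_card hi) := h1.symm
    _ < _ := hd.embAt_lt _ _ _

lemma Dm.pvF_le {P V : Finset (Fin n)} (hd : Dm P V) (hc : P.card = V.card) {i : Fin n}
    (hi : i ∉ P) : pvF P V hc i ≤ i := by
  rw [pvF_of_not_mem hc hi]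
  have h1 : embAt Pᶜ (clt Pᶜ i) (clt_lt_card (Finset.mem_compl.mpr hi)) = i :=
    embAt_clt (Finset.mem_compl.mpr hi) _
  calc _ ≤ embAt Pᶜ (clt Pᶜ i) (clt_lt_card (Finset.mem_compl.mpr hi)) :=
        hd.compl_embAt_le _ _ _
    _ = i := h1

lemma clt_strict {P : Finset (Fin n)} {i j : Fin n} (hi : i ∈ P) (hij : i < j) :
    clt P i < clt P j := by
  have h1 := cle_le_clt P (b := j) hij
  rw [cle_eq, if_pos hi] at h1
  omega

lemma pvF_strictMonoOn {P V : Finset (Fin n)} (hc : P.card = V.card) {i j : Fin n}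
    (hi : i ∈ P) (hj : j ∈ P) (hij : i < j) : pvF P V hc i < pvF P V hc j := by
  rw [pvF_of_mem hc hi, pvF_of_mem hc hj]
  exact embAt_strictMono V _ _ (clt_strict hi hij)

lemma pvF_strictMonoOn_compl {P V : Finset (Fin n)} (hc : P.card = V.card) {i j : Fin n}
    (hi : i ∉ P) (hj : j ∉ P) (hij : i < j) : pvF P V hc i < pvF P V hc j := by
  rw [pvF_of_not_mem hc hi, pvF_of_not_mem hc hj]
  exact embAt_strictMono Vᶜ _ _ (clt_strict (Finset.mem_compl.mpr hi) hij)


lemma clt_le_card (P : Finset (Fin n)) (a : Fin n) : clt P a ≤ P.card :=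
  card_le_card (filter_subset _ _)

lemma cle_le_card (P : Finset (Fin n)) (a : Fin n) : cle P a ≤ P.card :=
  card_le_card (filter_subset _ _)

def dA (P V : Finset (Fin n)) : ℕ := ∑ a : Fin n, (cle P a - cle V a)

def fixSet (P V : Finset (Fin n)) : Finset (Fin n) :=
  univ.filter fun x => x ∉ P ∧ x ∉ V ∧ clt P x = clt V x

def cddSet (P V : Finset (Fin n)) : Finset (Fin n) :=
  univ.filter fun x => x ∉ P ∧ x ∉ V ∧ clt P x ≠ clt V x

lemma pvPerm_inv_apply (P V : Finset (Fin n)) (hc : P.card = V.card) (x : Fin n) :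
    (pvPerm P V hc)⁻¹ x = pvF V P hc.symm x := rfl

lemma mem_P_iff {P V : Finset (Fin n)} (hd : Dm P V) (hc : P.card = V.card) (i : Fin n) :
    i ∈ P ↔ i < pvPerm P V hc i := by
  constructor
  · exact fun h => hd.lt_pvF hc h
  · intro h
    by_contra hn
    exact absurd h (not_lt.mpr (hd.pvF_le hc hn))

lemma mem_V_iff {P V : Finset (Fin n)} (hd : Dm P V) (hc : P.card = V.card) (x : Fin n) :
    x ∈ V ↔ (pvPerm P V hc)⁻¹ x < x := by
  rw [pvPerm_inv_apply]
  constructor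
  · intro hx
    rw [pvF_of_mem hc.symm hx]
    have h1 : embAt V (clt V x) (clt_lt_card hx) = x := embAt_clt hx _
    calc embAt P (clt V x) _ < embAt V (clt V x) (clt_lt_card hx) := hd.embAt_lt _ _ _
      _ = x := h1
  · intro h
    by_contra hn
    rw [pvF_of_not_mem hc.symm hn] at h
    have h1 : embAt Vᶜ (clt Vᶜ x) (clt_lt_card (Finset.mem_compl.mpr hn)) = x :=
      embAt_clt (Finset.mem_compl.mpr hn) _
    have h2 : x ≤ embAt Pᶜ (clt Vᶜ x)
        (by rw [← compl_card_eq hc.symm]; exact clt_lt_card (Finset.mem_compl.mpr hn)) := by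
      calc x = embAt Vᶜ (clt Vᶜ x) (clt_lt_card (Finset.mem_compl.mpr hn)) := h1.symm
        _ ≤ _ := hd.compl_embAt_le _ _ _
    exact absurd h (not_lt.mpr h2)

lemma exc_pvPerm {P V : Finset (Fin n)} (hd : Dm P V) (hc : P.card = V.card) :
    exc (pvPerm P V hc) = P.card := by
  unfold exc
  congr 1
  ext i
  simp only [mem_filter, mem_univ, true_and]
  exact (mem_P_iff hd hc i).symm

lemma cpk_pvPerm {P V : Finset (Fin n)} (hd : Dm P V) (hc : P.card = V.card) :
    cpk (pvPerm P V hc) = (V \ P).card := by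
  unfold cpk
  congr 1
  ext x
  simp only [mem_filter, mem_univ, true_and, Finset.mem_sdiff]
  constructor
  · rintro ⟨h1, h2⟩
    refine ⟨(mem_V_iff hd hc x).mpr h1, ?_⟩
    intro hP
    exact absurd ((mem_P_iff hd hc x).mp hP) (not_lt.mpr h2.le)
  · rintro ⟨hV, hP⟩
    have h1 : (pvPerm P V hc)⁻¹ x < x := (mem_V_iff hd hc x).mp hV
    refine ⟨h1, ?_⟩
    have h2 : pvPerm P V hc x ≤ x := hd.pvF_le hc hP
    rcases lt_or_eq_of_le h2 with h3 | h3
    · exact h3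
    · exfalso
      have hinv : (pvPerm P V hc)⁻¹ x = x := by
        conv_lhs => rw [← h3]
        exact Equiv.symm_apply_apply _ _
      rw [hinv] at h1
      exact lt_irrefl _ h1

lemma fixc_pvPerm {P V : Finset (Fin n)} (hd : Dm P V) (hc : P.card = V.card) :
    fixc (pvPerm P V hc) = (fixSet P V).card := by
  unfold fixc fixSet
  congr 1
  ext x
  simp only [mem_filter, mem_univ, true_and]
  constructor
  · intro hfix
    have hP : x ∉ P := by
      intro hP
      have hlt := (mem_P_iff hd hc x).mp hP
      rw [hfix] at hlt
      exact lt_irrefl _ hlt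
    have hV : x ∉ V := by
      intro hV
      have h1 := (mem_V_iff hd hc x).mp hV
      have hinv : (pvPerm P V hc)⁻¹ x = x := by
        conv_lhs => rw [← hfix]
        exact Equiv.symm_apply_apply _ _
      rw [hinv] at h1
      exact lt_irrefl _ h1
    refine ⟨hP, hV, ?_⟩
    have h2 : pvPerm P V hc x = embAt Vᶜ (clt Pᶜ x)
        (by rw [← compl_card_eq hc]; exact clt_lt_card (Finset.mem_compl.mpr hP)) :=
      pvF_of_not_mem hc hP
    have h3 : embAt Vᶜ (clt Vᶜ x) (clt_lt_card (Finset.mem_compl.mpr hV)) = x :=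
      embAt_clt (Finset.mem_compl.mpr hV) _
    have h4 : clt Pᶜ x = clt Vᶜ x := by
      apply embAt_inj Vᶜ
      rw [h3, ← h2, hfix]
    have h5 := clt_add_compl P x
    have h6 := clt_add_compl V x
    omega
  · rintro ⟨hP, hV, hcnt⟩
    have h4 : clt Pᶜ x = clt Vᶜ x := by
      have h5 := clt_add_compl P x
      have h6 := clt_add_compl V x
      omega
    have h2 : pvPerm P V hc x = embAt Vᶜ (clt Pᶜ x)
        (by rw [← compl_card_eq hc]; exact clt_lt_card (Finset.mem_compl.mpr hP)) :=
      pvF_of_not_mem hc hP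
    rw [h2]
    have h3 : embAt Vᶜ (clt Vᶜ x) (clt_lt_card (Finset.mem_compl.mpr hV)) = x :=
      embAt_clt (Finset.mem_compl.mpr hV) _
    exact (embAt_congr Vᶜ h4 _ _).trans h3

lemma card_filter_prod (p : Fin n × Fin n → Prop) [inst : DecidablePred p] :
    ((univ : Finset (Fin n × Fin n)).filter p).card
      = ∑ a : Fin n, ((univ : Finset (Fin n)).filter fun j => p (a, j)).card := by
  rw [Finset.card_filter, Fintype.sum_prod_type]
  exact Finset.sum_congr rfl fun a _ =>
    (Finset.card_filter (fun j => p (a, j)) _).symm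

lemma count_f1 {P V : Finset (Fin n)} (hd : Dm P V) (hc : P.card = V.card) (a : Fin n) :
    ((univ : Finset (Fin n)).filter fun j => j ∈ P ∧ j < a ∧ a < pvF P V hc j).card
      = clt P a - cle V a := by
  rw [← Nat.card_Ico]
  refine Finset.card_bij' (fun j _ => clt P j)
    (fun m hm => embAt P m (lt_of_lt_of_le (Finset.mem_Ico.mp hm).2 (clt_le_card P a)))
    ?_ ?_ ?_ ?_
  · intro j hj
    simp only [mem_filter, mem_univ, true_and] at hj
    obtain ⟨hjP, hja, haσ⟩ := hj
    rw [Finset.mem_Ico]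
    refine ⟨?_, clt_strict hjP hja⟩
    rw [pvF_of_mem hc hjP] at haσ
    by_contra hlt
    push_neg at hlt
    have := (embAt_le_iff V (clt P j) (by rw [← hc]; exact clt_lt_card hjP) a).mpr hlt
    exact absurd haσ (not_lt.mpr this)
  · intro m hm
    have hm' := Finset.mem_Ico.mp hm
    simp only [mem_filter, mem_univ, true_and]
    refine ⟨embAt_mem _ _ _, ?_, ?_⟩
    · rw [embAt_lt_iff]
      exact hm'.2
    · rw [pvF_embAt]
      rw [lt_iff_not_ge, embAt_le_iff]
      omega
  · intro j hj
    simp only [mem_filter, mem_univ, true_and] at hj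
    exact embAt_clt hj.1 _
  · intro m hm
    exact clt_embAt _ _ _

lemma count_f2 {P V : Finset (Fin n)} (hd : Dm P V) (hc : P.card = V.card) {a : Fin n}
    (ha : a ∉ P) :
    ((univ : Finset (Fin n)).filter fun j => j ∉ P ∧ a < j ∧ pvF P V hc j ≤ a).card
      = clt P a - cle V a := by
  have key : cle Vᶜ a - cle Pᶜ a = clt P a - cle V a := by
    have h1 := cle_add_compl P a
    have h2 := cle_add_compl V a
    have h3 := hd.2 a
    have h4 : cle P a = clt P a := by rw [cle_eq, if_neg ha, add_zero]
    omega
  rw [← key, ← Nat.card_Ico]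
  have hVPc : Vᶜ.card = Pᶜ.card := (compl_card_eq hc).symm
  refine Finset.card_bij' (fun j _ => clt Pᶜ j)
    (fun m hm => embAt Pᶜ m
      (lt_of_lt_of_le (Finset.mem_Ico.mp hm).2 (le_trans (cle_le_card Vᶜ a) hVPc.le)))
    ?_ ?_ ?_ ?_
  · intro j hj
    simp only [mem_filter, mem_univ, true_and] at hj
    obtain ⟨hjP, hja, hσa⟩ := hj
    have hjPc : j ∈ Pᶜ := Finset.mem_compl.mpr hjP
    rw [Finset.mem_Ico]
    constructor
    · by_contra hlt
      push_neg at hlt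
      have := (embAt_le_iff Pᶜ (clt Pᶜ j) (clt_lt_card hjPc) a).mpr hlt
      rw [embAt_clt hjPc] at this
      exact absurd hja (not_lt.mpr this)
    · rw [pvF_of_not_mem hc hjP] at hσa
      exact (embAt_le_iff Vᶜ (clt Pᶜ j) _ a).mp hσa
  · intro m hm
    have hm' := Finset.mem_Ico.mp hm
    simp only [mem_filter, mem_univ, true_and]
    refine ⟨Finset.mem_compl.mp (embAt_mem _ _ _), ?_, ?_⟩
    · rw [lt_iff_not_ge, embAt_le_iff]
      omega
    · rw [pvF_embAt_compl, embAt_le_iff]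
      exact hm'.2
  · intro j hj
    simp only [mem_filter, mem_univ, true_and] at hj
    exact embAt_clt (Finset.mem_compl.mpr hj.1) _
  · intro m hm
    exact clt_embAt _ _ _

lemma cros_pvPerm {P V : Finset (Fin n)} (hd : Dm P V) (hc : P.card = V.card) :
    cros (pvPerm P V hc) + P.card = dA P V := by
  set σ := pvPerm P V hc with hσ
  have hT1 : ((univ : Finset (Fin n × Fin n)).filter fun p =>
      p.2 < p.1 ∧ p.1 < σ p.2 ∧ σ p.2 < σ p.1)
      = (univ : Finset (Fin n × Fin n)).filter fun p =>
        p.1 ∈ P ∧ p.2 ∈ P ∧ p.2 < p.1 ∧ p.1 < σ p.2 := by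
    ext p
    simp only [mem_filter, mem_univ, true_and]
    constructor
    · rintro ⟨h1, h2, h3⟩
      have hp2 : p.2 ∈ P := (mem_P_iff hd hc p.2).mpr (lt_trans h1 h2)
      have hp1 : p.1 ∈ P := (mem_P_iff hd hc p.1).mpr (lt_trans h2 h3)
      exact ⟨hp1, hp2, h1, h2⟩
    · rintro ⟨hp1, hp2, h1, h2⟩
      exact ⟨h1, h2, pvF_strictMonoOn hc hp2 hp1 h1⟩
  have hT2 : ((univ : Finset (Fin n × Fin n)).filter fun p =>
      σ p.1 < σ p.2 ∧ σ p.2 ≤ p.1 ∧ p.1 < p.2)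
      = (univ : Finset (Fin n × Fin n)).filter fun p =>
        p.1 ∉ P ∧ p.2 ∉ P ∧ p.1 < p.2 ∧ σ p.2 ≤ p.1 := by
    ext p
    simp only [mem_filter, mem_univ, true_and]
    constructor
    · rintro ⟨h1, h2, h3⟩
      have hp2 : p.2 ∉ P := by
        intro hmem
        have hx := (mem_P_iff hd hc p.2).mp hmem
        rw [← hσ] at hx
        exact absurd h3 (asymm (lt_of_lt_of_le hx h2))
      have hp1 : p.1 ∉ P := by
        intro hmem
        have hx := (mem_P_iff hd hc p.1).mp hmem
        rw [← hσ] at hx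
        exact absurd (lt_of_le_of_lt h2 (lt_trans hx h1)) (lt_irrefl _)
      exact ⟨hp1, hp2, h3, h2⟩
    · rintro ⟨hp1, hp2, h1, h2⟩
      exact ⟨pvF_strictMonoOn_compl hc hp1 hp2 h1, h2, h1⟩
  have hcros : cros σ = ((univ : Finset (Fin n × Fin n)).filter fun p =>
        p.1 ∈ P ∧ p.2 ∈ P ∧ p.2 < p.1 ∧ p.1 < σ p.2).card
      + ((univ : Finset (Fin n × Fin n)).filter fun p =>
        p.1 ∉ P ∧ p.2 ∉ P ∧ p.1 < p.2 ∧ σ p.2 ≤ p.1).card := by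
    unfold cros
    rw [filter_or, card_union_of_disjoint, hT1, hT2]
    rw [Finset.disjoint_left]
    rintro p hp hp'
    rw [mem_filter] at hp hp'
    have := hp.2.1
    have := hp'.2.2.2
    omega
  have hc1 : ((univ : Finset (Fin n × Fin n)).filter fun p =>
        p.1 ∈ P ∧ p.2 ∈ P ∧ p.2 < p.1 ∧ p.1 < σ p.2).card
      = ∑ a : Fin n, if a ∈ P then clt P a - cle V a else 0 := by
    refine (card_filter_prod _).trans ?_
    apply Finset.sum_congr rfl
    intro a _
    by_cases ha : a ∈ P
    · rw [if_pos ha, ← count_f1 hd hc a]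
      congr 1
      ext j
      simp only [mem_filter, mem_univ, true_and]
      tauto
    · rw [if_neg ha]
      rw [Finset.card_eq_zero]
      rw [Finset.filter_eq_empty_iff]
      intro j _
      tauto
  have hc2 : ((univ : Finset (Fin n × Fin n)).filter fun p =>
        p.1 ∉ P ∧ p.2 ∉ P ∧ p.1 < p.2 ∧ σ p.2 ≤ p.1).card
      = ∑ a : Fin n, if a ∈ P then 0 else clt P a - cle V a := by
    refine (card_filter_prod _).trans ?_
    apply Finset.sum_congr rfl
    intro a _
    by_cases ha : a ∈ P
    · rw [if_pos ha]
      rw [Finset.card_eq_zero, Finset.filter_eq_empty_iff]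
      intro j _
      tauto
    · rw [if_neg ha, ← count_f2 hd hc ha]
      congr 1
      ext j
      simp only [mem_filter, mem_univ, true_and]
      tauto
  have hsum : cros σ = ∑ a : Fin n, (clt P a - cle V a) := by
    rw [hcros, hc1, hc2, ← Finset.sum_add_distrib]
    apply Finset.sum_congr rfl
    intro a _
    by_cases ha : a ∈ P <;> simp [ha]
  have hA : dA P V = (∑ a : Fin n, (clt P a - cle V a)) + P.card := by
    unfold dA
    have : ∀ a : Fin n, cle P a - cle V a
        = (clt P a - cle V a) + (if a ∈ P then 1 else 0) := by
      intro a
      have h1 := cle_eq P a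
      have h2 := hd.2 a
      have h3 := clt_le_cle V a
      by_cases ha : a ∈ P <;> simp only [ha, if_true, if_false] at h1 ⊢ <;> omega
    rw [Finset.sum_congr rfl (fun a _ => this a), Finset.sum_add_distrib]
    congr 1
    rw [Finset.sum_boole]
    simp
  rw [hsum, hA]


lemma card_filter_apply_lt (σ : Equiv.Perm (Fin n)) (c : Fin n) :
    ((univ : Finset (Fin n)).filter fun x => σ x < c).card = c.val := by
  rw [← Fin.card_Iio (b := c)]
  refine Finset.card_nbij' (fun x => σ x) (fun y => σ⁻¹ y) ?_ ?_ ?_ ?_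
  · intro x hx
    simp only [mem_coe, mem_filter, mem_univ, true_and] at hx
    simpa using hx
  · intro y hy
    simp only [mem_coe, Finset.mem_Iio] at hy
    simp only [mem_coe, mem_filter, mem_univ, true_and]
    simpa using hy
  · intro x _; simp
  · intro y _; simp

lemma card_filter_lt_apply (σ : Equiv.Perm (Fin n)) (c : Fin n) :
    ((univ : Finset (Fin n)).filter fun x => c < σ x).card = n - 1 - c.val := by
  rw [← Fin.card_Ioi (a := c)]
  refine Finset.card_nbij' (fun x => σ x) (fun y => σ⁻¹ y) ?_ ?_ ?_ ?_
  · intro x hx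
    simp only [mem_coe, mem_filter, mem_univ, true_and] at hx
    simpa using hx
  · intro y hy
    simp only [mem_coe, Finset.mem_Ioi] at hy
    simp only [mem_coe, mem_filter, mem_univ, true_and]
    simpa using hy
  · intro x _; simp
  · intro y _; simp

lemma exc_mono {σ : Equiv.Perm (Fin n)} (hA : Avoids321 σ) {i j : Fin n}
    (hi : i < σ i) (hj : j < σ j) (hij : i < j) : σ i < σ j := by
  rcases lt_trichotomy (σ i) (σ j) with h | h | h
  · exact h
  · exact absurd (σ.injective h) (ne_of_lt hij)
  · exfalso
    have hcard := card_filter_apply_lt σ (σ j)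
    have hex : ∃ k ∈ (univ : Finset (Fin n)).filter fun x => σ x < σ j, j < k := by
      by_contra hcon
      push_neg at hcon
      have hsub : ((univ : Finset (Fin n)).filter fun x => σ x < σ j)
          ⊆ (Finset.Iio j).erase i := by
        intro k hk
        simp only [mem_filter, mem_univ, true_and] at hk
        have hk1 : k ≤ j := hcon k (by simp [hk])
        have hk2 : k ≠ j := by rintro rfl; exact lt_irrefl _ hk
        have hk3 : k ≠ i := by rintro rfl; exact absurd hk (asymm h)
        rw [Finset.mem_erase, Finset.mem_Iio]
        exact ⟨hk3, lt_of_le_of_ne hk1 hk2⟩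
      have hcard2 := card_le_card hsub
      rw [hcard, Finset.card_erase_of_mem (by rw [Finset.mem_Iio]; exact hij),
        Fin.card_Iio] at hcard2
      have h1 : j.val < (σ j).val := hj
      have h2 : i.val < j.val := hij
      omega
    obtain ⟨k, hk, hjk⟩ := hex
    simp only [mem_filter, mem_univ, true_and] at hk
    exact hA ⟨i, j, k, hij, hjk, hk, h⟩

lemma nonexc_mono {σ : Equiv.Perm (Fin n)} (hA : Avoids321 σ) {i j : Fin n}
    (hi : ¬ i < σ i) (hj : ¬ j < σ j) (hij : i < j) : σ i < σ j := by
  rcases lt_trichotomy (σ i) (σ j) with h | h | h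
  · exact h
  · exact absurd (σ.injective h) (ne_of_lt hij)
  · exfalso
    have hcard := card_filter_lt_apply σ (σ i)
    have hex : ∃ k ∈ (univ : Finset (Fin n)).filter fun x => σ i < σ x, k < i := by
      by_contra hcon
      push_neg at hcon
      have hsub : ((univ : Finset (Fin n)).filter fun x => σ i < σ x)
          ⊆ (Finset.Ioi i).erase j := by
        intro k hk
        simp only [mem_filter, mem_univ, true_and] at hk
        have hk1 : i ≤ k := hcon k (by simp [hk])
        have hk2 : k ≠ i := by rintro rfl; exact lt_irrefl _ hk
        have hk3 : k ≠ j := by rintro rfl; exact absurd hk (asymm h)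
        rw [Finset.mem_erase, Finset.mem_Ioi]
        exact ⟨hk3, lt_of_le_of_ne hk1 (Ne.symm hk2)⟩
      have hcard2 := card_le_card hsub
      rw [hcard, Finset.card_erase_of_mem (by rw [Finset.mem_Ioi]; exact hij),
        Fin.card_Ioi] at hcard2
      have h1 : ¬ i.val < (σ i).val := hi
      have h2 : i.val < j.val := hij
      have h3 : j.val < n := j.isLt
      omega
    obtain ⟨k, hk, hki⟩ := hex
    simp only [mem_filter, mem_univ, true_and] at hk
    exact hA ⟨k, i, j, hki, hij, h, hk⟩

def pSet (σ : Equiv.Perm (Fin n)) : Finset (Fin n) := univ.filter fun i => i < σ i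

def vSet (σ : Equiv.Perm (Fin n)) : Finset (Fin n) := (pSet σ).image σ

lemma pv_card_eq (σ : Equiv.Perm (Fin n)) : (pSet σ).card = (vSet σ).card :=
  (Finset.card_image_of_injective _ σ.injective).symm

lemma mem_vSet_iff (σ : Equiv.Perm (Fin n)) (x : Fin n) :
    x ∈ vSet σ ↔ σ⁻¹ x < x := by
  unfold vSet pSet
  rw [Finset.mem_image]
  constructor
  · rintro ⟨y, hy, rfl⟩
    simp only [mem_filter, mem_univ, true_and] at hy
    simpa using hy
  · intro h
    exact ⟨σ⁻¹ x, by simp only [mem_filter, mem_univ, true_and]; simpa using h, by simp⟩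

lemma dm_of_avoids {σ : Equiv.Perm (Fin n)} (_ : Avoids321 σ) : Dm (pSet σ) (vSet σ) := by
  refine ⟨pv_card_eq σ, ?_⟩
  intro a
  unfold cle clt
  apply Finset.card_le_card_of_injOn (fun v => σ⁻¹ v)
  · intro v hv
    simp only [mem_coe, mem_filter] at hv ⊢
    have h1 : σ⁻¹ v < v := (mem_vSet_iff σ v).mp hv.1
    refine ⟨?_, lt_of_lt_of_le h1 hv.2⟩
    simp only [pSet, mem_filter, mem_univ, true_and]
    simpa using h1
  · intro x _ y _ hxy
    exact σ.symm.injective hxy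

lemma pvPerm_eq_of_avoids {σ : Equiv.Perm (Fin n)} (hA : Avoids321 σ) :
    pvPerm (pSet σ) (vSet σ) (pv_card_eq σ) = σ := by
  apply Equiv.ext
  intro i
  rw [pvPerm_apply]
  by_cases hi : i ∈ pSet σ
  · have hiv : i < σ i := by simpa [pSet] using hi
    have hmem : σ i ∈ vSet σ := by
      rw [mem_vSet_iff]
      simpa using hiv
    have hcnt : clt (pSet σ) i = clt (vSet σ) (σ i) := by
      unfold clt
      rw [show (vSet σ).filter (fun x => x < σ i)
          = ((pSet σ).filter (fun x => x < i)).image σ from ?_]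
      · exact (Finset.card_image_of_injective _ σ.injective).symm
      ext v
      simp only [Finset.mem_image, mem_filter]
      constructor
      · rintro ⟨hv1, hv2⟩
        obtain ⟨y, hy, rfl⟩ := Finset.mem_image.mp hv1
        refine ⟨y, ⟨hy, ?_⟩, rfl⟩
        simp only [pSet, mem_filter, mem_univ, true_and] at hy hi
        by_contra hge
        push_neg at hge
        rcases lt_or_eq_of_le hge with hgt | heq
        · exact absurd hv2 (asymm (exc_mono hA hi hy hgt))
        · subst heq; exact lt_irrefl _ hv2
      · rintro ⟨y, ⟨hy1, hy2⟩, rfl⟩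
        simp only [pSet, mem_filter, mem_univ, true_and] at hy1 hi
        refine ⟨?_, exc_mono hA hy1 hi hy2⟩
        rw [mem_vSet_iff]
        simpa using hy1
    rw [pvF_of_mem (pv_card_eq σ) hi]
    refine (embAt_congr _ hcnt _ (clt_lt_card hmem)).trans (embAt_clt hmem _)
  · have hiv : ¬ i < σ i := by simpa [pSet] using hi
    have hmem : σ i ∈ (vSet σ)ᶜ := by
      rw [Finset.mem_compl, mem_vSet_iff]
      simpa using hiv
    have hcnt : clt (pSet σ)ᶜ i = clt (vSet σ)ᶜ (σ i) := by
      unfold clt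
      rw [show (vSet σ)ᶜ.filter (fun x => x < σ i)
          = ((pSet σ)ᶜ.filter (fun x => x < i)).image σ from ?_]
      · exact (Finset.card_image_of_injective _ σ.injective).symm
      ext v
      simp only [Finset.mem_image, mem_filter]
      constructor
      · rintro ⟨hv1, hv2⟩
        refine ⟨σ⁻¹ v, ⟨?_, ?_⟩, by simp⟩
        · rw [Finset.mem_compl] at hv1 ⊢
          simp only [pSet, mem_filter, mem_univ, true_and]
          rw [mem_vSet_iff] at hv1
          intro hlt
          exact hv1 (by simpa using hlt)
        · rw [Finset.mem_compl, mem_vSet_iff] at hv1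
          have hv1' : ¬ σ⁻¹ v < σ (σ⁻¹ v) := by simpa using hv1
          by_contra hge
          push_neg at hge
          rcases lt_or_eq_of_le hge with hgt | heq
          · have := nonexc_mono hA hiv hv1' hgt
            simp only [Equiv.Perm.inv_def, Equiv.apply_symm_apply] at this
            exact absurd hv2 (asymm this)
          · have hveq : σ i = v := by rw [heq]; simp
            rw [hveq] at hv2
            exact lt_irrefl _ hv2
      · rintro ⟨y, ⟨hy1, hy2⟩, rfl⟩
        rw [Finset.mem_compl] at hy1
        simp only [pSet, mem_filter, mem_univ, true_and] at hy1
        refine ⟨?_, nonexc_mono hA hy1 hiv hy2⟩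
        rw [Finset.mem_compl, mem_vSet_iff]
        intro hlt
        exact hy1 (by simpa using hlt)
    rw [pvF_of_not_mem (pv_card_eq σ) hi]
    refine (embAt_congr _ hcnt _ (clt_lt_card hmem)).trans (embAt_clt hmem _)

lemma avoids_pvPerm {P V : Finset (Fin n)} (hc : P.card = V.card) :
    Avoids321 (pvPerm P V hc) := by
  rintro ⟨i, j, k, hij, hjk, h1, h2⟩
  by_cases hi : i ∈ P <;> by_cases hj : j ∈ P <;> by_cases hk : k ∈ P
  all_goals first
    | exact absurd h2 (asymm (pvF_strictMonoOn hc hi hj hij))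
    | exact absurd h1 (asymm (pvF_strictMonoOn hc hj hk hjk))
    | exact absurd h2 (asymm (pvF_strictMonoOn_compl hc hi hj hij))
    | exact absurd h1 (asymm (pvF_strictMonoOn_compl hc hj hk hjk))
    | exact absurd (pvF_strictMonoOn hc hi hk (lt_trans hij hjk))
        (asymm (lt_trans h1 h2))
    | exact absurd (pvF_strictMonoOn_compl hc hi hk (lt_trans hij hjk))
        (asymm (lt_trans h1 h2))

def pvPermT (P V : Finset (Fin n)) : Equiv.Perm (Fin n) :=
  if h : P.card = V.card then pvPerm P V h else 1

lemma pvPermT_eq {P V : Finset (Fin n)} (hc : P.card = V.card) :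
    pvPermT P V = pvPerm P V hc := dif_pos hc

lemma pSet_pvPerm {P V : Finset (Fin n)} (hd : Dm P V) (hc : P.card = V.card) :
    pSet (pvPerm P V hc) = P := by
  unfold pSet
  ext i
  simp only [mem_filter, mem_univ, true_and]
  exact (mem_P_iff hd hc i).symm

lemma vSet_pvPerm {P V : Finset (Fin n)} (hd : Dm P V) (hc : P.card = V.card) :
    vSet (pvPerm P V hc) = V := by
  unfold vSet
  ext x
  rw [Finset.mem_image]
  constructor
  · rintro ⟨y, hy, rfl⟩
    rw [pSet_pvPerm hd hc] at hy
    rw [pvPerm_apply, pvF_of_mem hc hy]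
    exact embAt_mem _ _ _
  · intro hx
    refine ⟨(pvPerm P V hc)⁻¹ x, ?_, by simp⟩
    rw [pSet_pvPerm hd hc]
    have h1 : (pvPerm P V hc)⁻¹ x < x := (mem_V_iff hd hc x).mp hx
    by_contra hn
    have h2 : x ≤ (pvPerm P V hc)⁻¹ x := by
      have := hd.pvF_le hc hn
      rw [← pvPerm_apply] at this
      calc x = pvPerm P V hc ((pvPerm P V hc)⁻¹ x) := by simp
        _ ≤ _ := this
    exact absurd h1 (not_lt.mpr h2)

/-- transfer of a statistics sum from 321-avoiding permutations to dominated pairs -/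
lemma sum_transfer (f : ℕ → ℕ → ℕ → ℕ → ℝ) :
    ∑ σ ∈ univ.filter (fun σ : Equiv.Perm (Fin n) => Avoids321 σ),
      f (cros σ) (exc σ) (fixc σ) (cpk σ)
    = ∑ pv ∈ (univ : Finset (Finset (Fin n) × Finset (Fin n))).filter
        (fun pv => Dm pv.1 pv.2),
      f (dA pv.1 pv.2 - pv.1.card) pv.1.card ((fixSet pv.1 pv.2).card)
        ((pv.2 \ pv.1).card) := by
  symm
  refine Finset.sum_nbij' (i := fun pv => pvPermT pv.1 pv.2)
    (j := fun σ => (pSet σ, vSet σ)) ?_ ?_ ?_ ?_ ?_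
  · intro pv hpv
    simp only [mem_filter, mem_univ, true_and] at hpv ⊢
    rw [pvPermT_eq hpv.1]
    exact avoids_pvPerm hpv.1
  · intro σ hσ
    simp only [mem_filter, mem_univ, true_and] at hσ ⊢
    exact dm_of_avoids hσ
  · intro pv hpv
    simp only [mem_filter, mem_univ, true_and] at hpv
    rw [pvPermT_eq hpv.1]
    have h1 := pSet_pvPerm hpv hpv.1
    have h2 := vSet_pvPerm hpv hpv.1
    exact Prod.ext h1 h2
  · intro σ hσ
    simp only [mem_filter, mem_univ, true_and] at hσ
    dsimp only
    rw [pvPermT_eq (pv_card_eq σ)]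
    exact pvPerm_eq_of_avoids hσ
  · intro pv hpv
    simp only [mem_filter, mem_univ, true_and] at hpv
    rw [pvPermT_eq hpv.1]
    have hcros := cros_pvPerm hpv hpv.1
    have hexc := exc_pvPerm hpv hpv.1
    have hfix := fixc_pvPerm hpv hpv.1
    have hcpk := cpk_pvPerm hpv hpv.1
    rw [hexc, hfix, hcpk]
    congr 1
    omega


lemma clt_sdiff_add {S V : Finset (Fin n)} (h : S ⊆ V) (a : Fin n) :
    clt (V \ S) a + clt S a = clt V a := by
  unfold clt
  rw [← card_union_of_disjoint (disjoint_filter_filter sdiff_disjoint), ← filter_union,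
    sdiff_union_of_subset h]

lemma cle_sdiff_add {S V : Finset (Fin n)} (h : S ⊆ V) (a : Fin n) :
    cle (V \ S) a + cle S a = cle V a := by
  unfold cle
  rw [← card_union_of_disjoint (disjoint_filter_filter sdiff_disjoint), ← filter_union,
    sdiff_union_of_subset h]

lemma clt_union_add {P W : Finset (Fin n)} (h : Disjoint P W) (a : Fin n) :
    clt (P ∪ W) a = clt P a + clt W a := by
  unfold clt
  rw [filter_union, card_union_of_disjoint (disjoint_filter_filter h)]

lemma cle_union_add {P W : Finset (Fin n)} (h : Disjoint P W) (a : Fin n) :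
    cle (P ∪ W) a = cle P a + cle W a := by
  unfold cle
  rw [filter_union, card_union_of_disjoint (disjoint_filter_filter h)]

lemma clt_le_of_subset {S V : Finset (Fin n)} (h : S ⊆ V) (a : Fin n) :
    clt S a ≤ clt V a := by
  apply card_le_card
  intro x hx
  simp only [mem_filter] at *
  exact ⟨h hx.1, hx.2⟩

lemma mem_cddSet {P V : Finset (Fin n)} {x : Fin n} :
    x ∈ cddSet P V ↔ x ∉ P ∧ x ∉ V ∧ clt P x ≠ clt V x := by
  unfold cddSet
  simp only [mem_filter, mem_univ, true_and]

lemma mem_fixSet {P V : Finset (Fin n)} {x : Fin n} :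
    x ∈ fixSet P V ↔ x ∉ P ∧ x ∉ V ∧ clt P x = clt V x := by
  unfold fixSet
  simp only [mem_filter, mem_univ, true_and]

section Toggle

variable {P V S : Finset (Fin n)}

lemma tog_dm (hd : Dm P V) (hS : S ⊆ P ∩ V) : Dm (P \ S) (V \ S) := by
  have hSP : S ⊆ P := hS.trans (inter_subset_left)
  have hSV : S ⊆ V := hS.trans (inter_subset_right)
  constructor
  · rw [card_sdiff_of_subset hSP, card_sdiff_of_subset hSV, hd.1]
  · intro a
    have h1 := cle_sdiff_add hSV a
    have h2 := clt_sdiff_add hSP a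
    have h3 := hd.2 a
    by_cases ha : a ∈ S
    · have h4 : cle S a = clt S a + 1 := by rw [cle_eq, if_pos ha]
      omega
    · have h4 : cle S a = clt S a := by rw [cle_eq, if_neg ha, add_zero]
      omega

lemma tog_dA (hd : Dm P V) (hS : S ⊆ P ∩ V) : dA (P \ S) (V \ S) = dA P V := by
  have hSP : S ⊆ P := hS.trans (inter_subset_left)
  have hSV : S ⊆ V := hS.trans (inter_subset_right)
  unfold dA
  apply Finset.sum_congr rfl
  intro a _
  have h1 := cle_sdiff_add hSV a
  have h2 := cle_sdiff_add hSP a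
  have h3 := hd.2 a
  have h4 := clt_le_cle P a
  have h5 := (tog_dm hd hS).2 a
  have h6 := clt_le_cle (P \ S) a
  omega

lemma tog_fix (hd : Dm P V) (hS : S ⊆ P ∩ V) : fixSet (P \ S) (V \ S) = fixSet P V := by
  have hSP : S ⊆ P := hS.trans (inter_subset_left)
  have hSV : S ⊆ V := hS.trans (inter_subset_right)
  ext x
  rw [mem_fixSet, mem_fixSet]
  have h1 := clt_sdiff_add hSV x
  have h2 := clt_sdiff_add hSP x
  have h3 := clt_le_of_subset hSV x
  have h4 := clt_le_of_subset hSP x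
  simp only [Finset.mem_sdiff]
  constructor
  · rintro ⟨hx1, hx2, hx3⟩
    by_cases hxS : x ∈ S
    · exfalso
      have hxV : x ∈ V := hSV hxS
      have h5 := hd.clt_lt_of_mem hxV
      omega
    · have hx1' : x ∉ P := fun h => hx1 ⟨h, hxS⟩
      have hx2' : x ∉ V := fun h => hx2 ⟨h, hxS⟩
      exact ⟨hx1', hx2', by omega⟩
  · rintro ⟨hx1, hx2, hx3⟩
    have hxS : x ∉ S := fun h => hx2 (hSV h)
    exact ⟨fun h => hx1 h.1, fun h => hx2 h.1, by omega⟩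

lemma tog_e (hS : S ⊆ P ∩ V) : (V \ S) \ (P \ S) = V \ P := by
  have hSP : S ⊆ P := hS.trans (inter_subset_left)
  ext x
  simp only [Finset.mem_sdiff]
  constructor
  · rintro ⟨⟨hxV, hxS⟩, hx⟩
    refine ⟨hxV, fun hxP => hx ⟨hxP, hxS⟩⟩
  · rintro ⟨hxV, hxP⟩
    have hxS : x ∉ S := fun h => hxP (hSP h)
    exact ⟨⟨hxV, hxS⟩, fun h => hxP h.1⟩

lemma tog_d : (P \ S) ∩ (V \ S) = (P ∩ V) \ S := by
  ext x
  simp only [Finset.mem_sdiff, Finset.mem_inter]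
  tauto

lemma tog_cdd (hd : Dm P V) (hS : S ⊆ P ∩ V) :
    cddSet (P \ S) (V \ S) = cddSet P V ∪ S := by
  have hSP : S ⊆ P := hS.trans (inter_subset_left)
  have hSV : S ⊆ V := hS.trans (inter_subset_right)
  ext x
  rw [mem_cddSet, Finset.mem_union, mem_cddSet]
  have h1 := clt_sdiff_add hSV x
  have h2 := clt_sdiff_add hSP x
  have h3 := clt_le_of_subset hSV x
  have h4 := clt_le_of_subset hSP x
  simp only [Finset.mem_sdiff]
  constructor
  · rintro ⟨hx1, hx2, hx3⟩
    by_cases hxS : x ∈ S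
    · exact Or.inr hxS
    · exact Or.inl ⟨fun h => hx1 ⟨h, hxS⟩, fun h => hx2 ⟨h, hxS⟩, by omega⟩
  · rintro (⟨hx1, hx2, hx3⟩ | hxS)
    · have hxS : x ∉ S := fun h => hx2 (hSV h)
      exact ⟨fun h => hx1 h.1, fun h => hx2 h.1, by omega⟩
    · have hxV : x ∈ V := hSV hxS
      have h5 := hd.clt_lt_of_mem hxV
      have h6 := clt_le_of_subset (show S ⊆ V from hSV) x
      exact ⟨fun h => h.2 hxS, fun h => h.2 hxS, by omega⟩

lemma cdd_disj_P : Disjoint (cddSet P V) P := by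
  rw [Finset.disjoint_left]
  intro x hx
  exact (mem_cddSet.mp hx).1

lemma cdd_disj_V : Disjoint (cddSet P V) V := by
  rw [Finset.disjoint_left]
  intro x hx
  exact (mem_cddSet.mp hx).2.1

lemma untog_dm (hd : Dm P V) : Dm (P ∪ cddSet P V) (V ∪ cddSet P V) := by
  constructor
  · rw [card_union_of_disjoint cdd_disj_P.symm, card_union_of_disjoint cdd_disj_V.symm, hd.1]
  · intro a
    rw [cle_union_add cdd_disj_V.symm, clt_union_add cdd_disj_P.symm]
    have h3 := hd.2 a
    by_cases ha : a ∈ cddSet P V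
    · have h4 : cle (cddSet P V) a = clt (cddSet P V) a + 1 := by rw [cle_eq, if_pos ha]
      obtain ⟨haP, haV, hne⟩ := mem_cddSet.mp ha
      have h5 : cle V a = clt V a := by rw [cle_eq, if_neg haV, add_zero]
      have h6 := clt_le_cle V a
      omega
    · have h4 : cle (cddSet P V) a = clt (cddSet P V) a := by rw [cle_eq, if_neg ha, add_zero]
      omega

lemma untog_free : cddSet (P ∪ cddSet P V) (V ∪ cddSet P V) = ∅ := by
  rw [Finset.eq_empty_iff_forall_notMem]
  intro x hx
  rw [mem_cddSet] at hx
  obtain ⟨hx1, hx2, hx3⟩ := hx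
  rw [Finset.mem_union] at hx1 hx2
  push_neg at hx1 hx2
  have hxc : x ∉ cddSet P V := hx1.2
  rw [mem_cddSet] at hxc
  push_neg at hxc
  have h5 : clt P x = clt V x := hxc hx1.1 hx2.1
  rw [clt_union_add cdd_disj_P.symm, clt_union_add cdd_disj_V.symm] at hx3
  omega

lemma untog_inter : cddSet P V ⊆ (P ∪ cddSet P V) ∩ (V ∪ cddSet P V) := by
  intro x hx
  rw [Finset.mem_inter, Finset.mem_union, Finset.mem_union]
  exact ⟨Or.inr hx, Or.inr hx⟩

lemma union_sdiff_self' {A W : Finset (Fin n)} (h : Disjoint W A) : (A ∪ W) \ W = A := by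
  ext x
  simp only [Finset.mem_sdiff, Finset.mem_union]
  constructor
  · rintro ⟨hx1 | hx1, hx2⟩
    · exact hx1
    · exact absurd hx1 hx2
  · intro hx
    exact ⟨Or.inl hx, fun hw => (Finset.disjoint_left.mp h hw) hx⟩

end Toggle

lemma pow_add_sum (u v : ℝ) (T : Finset (Fin n)) :
    (u + v) ^ T.card = ∑ S ∈ T.powerset, v ^ S.card * u ^ (T \ S).card := by
  rw [show u + v = v + u from add_comm u v, ← Finset.prod_const (b := v + u)]
  rw [Finset.prod_add]
  apply Finset.sum_congr rfl
  intro S _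
  rw [Finset.prod_const, Finset.prod_const]

lemma toggle_sum (g : ℕ → ℕ → ℕ → ℝ) (u v : ℝ) :
    ∑ pv ∈ (univ : Finset (Finset (Fin n) × Finset (Fin n))).filter
        (fun pv => Dm pv.1 pv.2),
      g (dA pv.1 pv.2) ((fixSet pv.1 pv.2).card) ((pv.2 \ pv.1).card)
        * u ^ ((pv.1 ∩ pv.2).card) * v ^ ((cddSet pv.1 pv.2).card)
    = ∑ pv ∈ (univ : Finset (Finset (Fin n) × Finset (Fin n))).filter
        (fun pv => Dm pv.1 pv.2 ∧ cddSet pv.1 pv.2 = ∅),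
      g (dA pv.1 pv.2) ((fixSet pv.1 pv.2).card) ((pv.2 \ pv.1).card)
        * (u + v) ^ ((pv.1 ∩ pv.2).card) := by
  symm
  have hstep : ∀ pv ∈ (univ : Finset (Finset (Fin n) × Finset (Fin n))).filter
      (fun pv => Dm pv.1 pv.2 ∧ cddSet pv.1 pv.2 = ∅),
      g (dA pv.1 pv.2) ((fixSet pv.1 pv.2).card) ((pv.2 \ pv.1).card)
        * (u + v) ^ ((pv.1 ∩ pv.2).card)
      = ∑ S ∈ (pv.1 ∩ pv.2).powerset,
          g (dA pv.1 pv.2) ((fixSet pv.1 pv.2).card) ((pv.2 \ pv.1).card)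
            * u ^ (((pv.1 ∩ pv.2) \ S).card) * v ^ S.card := by
    intro pv _
    rw [pow_add_sum, Finset.mul_sum]
    apply Finset.sum_congr rfl
    intro S _
    ring
  rw [Finset.sum_congr rfl hstep, Finset.sum_sigma']
  refine Finset.sum_nbij' (i := fun x => (x.1.1 \ x.2, x.1.2 \ x.2))
    (j := fun pv => ⟨(pv.1 ∪ cddSet pv.1 pv.2, pv.2 ∪ cddSet pv.1 pv.2), cddSet pv.1 pv.2⟩)
    ?_ ?_ ?_ ?_ ?_
  · rintro ⟨pv, S⟩ hx
    simp only [Finset.mem_sigma, mem_filter, mem_univ, true_and, Finset.mem_powerset] at hx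
    obtain ⟨⟨hdm, _⟩, hS⟩ := hx
    simp only [mem_filter, mem_univ, true_and]
    exact tog_dm hdm hS
  · intro pv hpv
    simp only [mem_filter, mem_univ, true_and] at hpv
    simp only [Finset.mem_sigma, mem_filter, mem_univ, true_and, Finset.mem_powerset]
    exact ⟨⟨untog_dm hpv, untog_free⟩, untog_inter⟩
  · rintro ⟨pv, S⟩ hx
    simp only [Finset.mem_sigma, mem_filter, mem_univ, true_and, Finset.mem_powerset] at hx
    obtain ⟨⟨hdm, hfree⟩, hS⟩ := hx
    have hSP : S ⊆ pv.1 := hS.trans (inter_subset_left)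
    have hSV : S ⊆ pv.2 := hS.trans (inter_subset_right)
    have hcdd : cddSet (pv.1 \ S) (pv.2 \ S) = S := by
      rw [tog_cdd hdm hS, hfree, Finset.empty_union]
    dsimp only
    rw [hcdd, Finset.sdiff_union_of_subset hSP, Finset.sdiff_union_of_subset hSV]
  · intro pv hpv
    simp only [mem_filter, mem_univ, true_and] at hpv
    dsimp only
    rw [union_sdiff_self' cdd_disj_P, union_sdiff_self' cdd_disj_V]
  · rintro ⟨pv, S⟩ hx
    simp only [Finset.mem_sigma, mem_filter, mem_univ, true_and, Finset.mem_powerset] at hx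
    obtain ⟨⟨hdm, hfree⟩, hS⟩ := hx
    have hcdd : cddSet (pv.1 \ S) (pv.2 \ S) = S := by
      rw [tog_cdd hdm hS, hfree, Finset.empty_union]
    dsimp only
    rw [tog_dA hdm hS, tog_fix hdm hS, tog_e hS, tog_d, hcdd]


lemma k_eq {P V : Finset (Fin n)} (hd : Dm P V) :
    P.card = (V \ P).card + (P ∩ V).card := by
  have h := Finset.card_sdiff_add_card_inter V P
  rw [Finset.inter_comm] at h
  rw [← hd.1] at h
  omega

lemma n_partition {P V : Finset (Fin n)} (hd : Dm P V) :
    n = 2 * (V \ P).card + (P ∩ V).card + (fixSet P V).card + (cddSet P V).card := by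
  have hu : P ∪ ((V \ P) ∪ (fixSet P V ∪ cddSet P V)) = univ := by
    ext x
    simp only [Finset.mem_union, mem_univ, iff_true, mem_fixSet, mem_cddSet,
      Finset.mem_sdiff]
    by_cases hP : x ∈ P
    · exact Or.inl hP
    by_cases hV : x ∈ V
    · exact Or.inr (Or.inl ⟨hV, hP⟩)
    by_cases hcl : clt P x = clt V x
    · exact Or.inr (Or.inr (Or.inl ⟨hP, hV, hcl⟩))
    · exact Or.inr (Or.inr (Or.inr ⟨hP, hV, hcl⟩))
  have hd1 : Disjoint (fixSet P V) (cddSet P V) := by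
    rw [Finset.disjoint_left]
    intro x hx hx'
    exact (mem_cddSet.mp hx').2.2 (mem_fixSet.mp hx).2.2
  have hd2 : Disjoint (V \ P) (fixSet P V ∪ cddSet P V) := by
    rw [Finset.disjoint_left]
    intro x hx hx'
    rw [Finset.mem_sdiff] at hx
    rw [Finset.mem_union] at hx'
    rcases hx' with h' | h'
    · exact (mem_fixSet.mp h').2.1 hx.1
    · exact (mem_cddSet.mp h').2.1 hx.1
  have hd3 : Disjoint P ((V \ P) ∪ (fixSet P V ∪ cddSet P V)) := by
    rw [Finset.disjoint_left]
    intro x hx hx'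
    rw [Finset.mem_union, Finset.mem_union] at hx'
    rcases hx' with h' | h' | h'
    · exact (Finset.mem_sdiff.mp h').2 hx
    · exact (mem_fixSet.mp h').1 hx
    · exact (mem_cddSet.mp h').1 hx
  have hcard : n = P.card + ((V \ P).card + ((fixSet P V).card + (cddSet P V).card)) := by
    rw [← card_union_of_disjoint hd1, ← card_union_of_disjoint hd2,
      ← card_union_of_disjoint hd3, hu, Finset.card_univ, Fintype.card_fin]
  have hk := k_eq hd
  omega

lemma term_eq (q r t x : ℝ) (h1 : (1:ℝ)+x ≠ 0) (h2 : x+t ≠ 0) (h3 : 1+x*t ≠ 0)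
    (c e d F w N : ℕ) (hN : N = 2*e + d + F + w) :
    ((1+x*t)/(1+x))^N * (q ^ c * ((1+x)^2*t/((x+t)*(1+x*t))) ^ e
        * (q*(x+t)/(1+x*t)) ^ (e+d) * ((1+x)*r/(1+x*t)) ^ F)
    = q ^ (c+(e+d)) * r ^ F * t ^ e * ((x+t)/(1+x)) ^ d * ((1+x*t)/(1+x)) ^ w := by
  subst hN
  rw [show (2*e + d + F + w) = (e+e) + d + F + w by ring]
  rw [pow_add, pow_add, pow_add, pow_add, pow_add (q*(x+t)/(1+x*t))]
  have be : ((1+x*t)/(1+x)) * ((1+x*t)/(1+x)) * ((1+x)^2*t/((x+t)*(1+x*t)))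
      * ((q*(x+t)/(1+x*t))) = t * q := by
    field_simp
  have bd : ((1+x*t)/(1+x)) * (q*(x+t)/(1+x*t)) = q * ((x+t)/(1+x)) := by
    field_simp
  have bF : ((1+x*t)/(1+x)) * ((1+x)*r/(1+x*t)) = r := by
    field_simp
  calc ((1+x*t)/(1+x))^e * ((1+x*t)/(1+x))^e * ((1+x*t)/(1+x))^d * ((1+x*t)/(1+x))^F
        * ((1+x*t)/(1+x))^w
      * (q ^ c * ((1+x)^2*t/((x+t)*(1+x*t))) ^ e
        * ((q*(x+t)/(1+x*t)) ^ e * (q*(x+t)/(1+x*t)) ^ d) * ((1+x)*r/(1+x*t)) ^ F)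
      = q ^ c * (((1+x*t)/(1+x)) * ((1+x*t)/(1+x)) * ((1+x)^2*t/((x+t)*(1+x*t)))
          * ((q*(x+t)/(1+x*t)))) ^ e
        * (((1+x*t)/(1+x)) * (q*(x+t)/(1+x*t))) ^ d
        * (((1+x*t)/(1+x)) * ((1+x)*r/(1+x*t))) ^ F
        * ((1+x*t)/(1+x))^w := by
        rw [mul_pow, mul_pow, mul_pow, mul_pow, mul_pow]
        ring
    _ = q ^ c * (t*q) ^ e * (q * ((x+t)/(1+x))) ^ d * r ^ F * ((1+x*t)/(1+x))^w := by
        rw [be, bd, bF]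
    _ = q ^ (c+(e+d)) * r ^ F * t ^ e * ((x+t)/(1+x)) ^ d * ((1+x*t)/(1+x)) ^ w := by
        have hs1 : (t*q)^e = t^e * q^e := mul_pow t q e
        have hs2 : (q * ((x+t)/(1+x)))^d = q^d * ((x+t)/(1+x))^d := mul_pow _ _ d
        have hq : q^(c+(e+d)) = q^c * q^e * q^d := by rw [pow_add, pow_add, mul_assoc]
        rw [hs1, hs2, hq]
        ring

end PV

open PV in
theorem stmt10 (n : ℕ) (hn : 1 ≤ n) (q r x t : ℝ) (h : (1 + x) * (x + t) * (1 + x * t) ≠ 0) :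
    ∑ σ ∈ Finset.univ.filter (fun σ : Equiv.Perm (Fin n) => Avoids321 σ),
        q ^ cros σ * (t * q) ^ exc σ * r ^ fixc σ =
      ((1 + x * t) / (1 + x)) ^ n *
        ∑ σ ∈ Finset.univ.filter (fun σ : Equiv.Perm (Fin n) => Avoids321 σ),
          q ^ cros σ * ((1 + x) ^ 2 * t / ((x + t) * (1 + x * t))) ^ cpk σ *
            (q * (x + t) / (1 + x * t)) ^ exc σ *
            ((1 + x) * r / (1 + x * t)) ^ fixc σ := by
  classical
  have hx1 : (1:ℝ) + x ≠ 0 := fun hz => h (by rw [hz]; ring)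
  have hx2 : x + t ≠ 0 := fun hz => h (by rw [hz]; ring)
  have hx3 : (1:ℝ) + x * t ≠ 0 := fun hz => h (by rw [hz]; ring)
  have hL := PV.sum_transfer (n := n) (fun c e fx pk => q ^ c * (t*q) ^ e * r ^ fx)
  have hR := PV.sum_transfer (n := n) (fun c e fx pk =>
    q ^ c * ((1+x)^2*t/((x+t)*(1+x*t))) ^ pk * (q*(x+t)/(1+x*t)) ^ e
      * ((1+x)*r/(1+x*t)) ^ fx)
  have hb : (x+t)/(1+x) + (1+x*t)/(1+x) = t + 1 := by
    rw [← add_div, div_eq_iff hx1]; ring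
  calc ∑ σ ∈ Finset.univ.filter (fun σ : Equiv.Perm (Fin n) => Avoids321 σ),
        q ^ cros σ * (t * q) ^ exc σ * r ^ fixc σ
      = ∑ pv ∈ (univ : Finset (Finset (Fin n) × Finset (Fin n))).filter
          (fun pv => PV.Dm pv.1 pv.2),
        q ^ (PV.dA pv.1 pv.2 - pv.1.card) * (t*q) ^ pv.1.card
          * r ^ ((PV.fixSet pv.1 pv.2).card) := hL
    _ = ∑ pv ∈ (univ : Finset (Finset (Fin n) × Finset (Fin n))).filter
          (fun pv => PV.Dm pv.1 pv.2),
        q ^ (PV.dA pv.1 pv.2) * r ^ ((PV.fixSet pv.1 pv.2).card)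
            * t ^ ((pv.2 \ pv.1).card)
          * t ^ ((pv.1 ∩ pv.2).card) * (1:ℝ) ^ ((PV.cddSet pv.1 pv.2).card) := by
        apply Finset.sum_congr rfl
        intro pv hpv
        simp only [Finset.mem_filter, Finset.mem_univ, true_and] at hpv
        obtain ⟨c, hc2⟩ : ∃ c, PV.dA pv.1 pv.2 = c + pv.1.card :=
          ⟨PV.dA pv.1 pv.2 - pv.1.card, by
            have := PV.cros_pvPerm hpv hpv.1; omega⟩
        have hk := PV.k_eq hpv
        rw [hc2, Nat.add_sub_cancel, hk]
        ring
    _ = ∑ pv ∈ (univ : Finset (Finset (Fin n) × Finset (Fin n))).filter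
          (fun pv => PV.Dm pv.1 pv.2 ∧ PV.cddSet pv.1 pv.2 = ∅),
        q ^ (PV.dA pv.1 pv.2) * r ^ ((PV.fixSet pv.1 pv.2).card)
            * t ^ ((pv.2 \ pv.1).card)
          * (t + 1) ^ ((pv.1 ∩ pv.2).card) :=
        PV.toggle_sum (fun A F E => q ^ A * r ^ F * t ^ E) t 1
    _ = ∑ pv ∈ (univ : Finset (Finset (Fin n) × Finset (Fin n))).filter
          (fun pv => PV.Dm pv.1 pv.2 ∧ PV.cddSet pv.1 pv.2 = ∅),
        q ^ (PV.dA pv.1 pv.2) * r ^ ((PV.fixSet pv.1 pv.2).card)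
            * t ^ ((pv.2 \ pv.1).card)
          * ((x+t)/(1+x) + (1+x*t)/(1+x)) ^ ((pv.1 ∩ pv.2).card) := by
        apply Finset.sum_congr rfl
        intro pv _
        rw [hb]
    _ = ∑ pv ∈ (univ : Finset (Finset (Fin n) × Finset (Fin n))).filter
          (fun pv => PV.Dm pv.1 pv.2),
        q ^ (PV.dA pv.1 pv.2) * r ^ ((PV.fixSet pv.1 pv.2).card)
            * t ^ ((pv.2 \ pv.1).card)
          * ((x+t)/(1+x)) ^ ((pv.1 ∩ pv.2).card)
          * ((1+x*t)/(1+x)) ^ ((PV.cddSet pv.1 pv.2).card) :=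
        (PV.toggle_sum (fun A F E => q ^ A * r ^ F * t ^ E)
          ((x+t)/(1+x)) ((1+x*t)/(1+x))).symm
    _ = ∑ pv ∈ (univ : Finset (Finset (Fin n) × Finset (Fin n))).filter
          (fun pv => PV.Dm pv.1 pv.2),
        ((1+x*t)/(1+x)) ^ n * (q ^ (PV.dA pv.1 pv.2 - pv.1.card)
          * ((1+x)^2*t/((x+t)*(1+x*t))) ^ ((pv.2 \ pv.1).card)
          * (q*(x+t)/(1+x*t)) ^ pv.1.card
          * ((1+x)*r/(1+x*t)) ^ ((PV.fixSet pv.1 pv.2).card)) := by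
        apply Finset.sum_congr rfl
        intro pv hpv
        simp only [Finset.mem_filter, Finset.mem_univ, true_and] at hpv
        obtain ⟨c, hc2⟩ : ∃ c, PV.dA pv.1 pv.2 = c + pv.1.card :=
          ⟨PV.dA pv.1 pv.2 - pv.1.card, by
            have := PV.cros_pvPerm hpv hpv.1; omega⟩
        have hk := PV.k_eq hpv
        rw [hc2, Nat.add_sub_cancel, hk]
        exact (PV.term_eq q r t x hx1 hx2 hx3 c ((pv.2 \ pv.1).card)
          ((pv.1 ∩ pv.2).card) ((PV.fixSet pv.1 pv.2).card)
          ((PV.cddSet pv.1 pv.2).card) n (PV.n_partition hpv)).symm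
    _ = ((1+x*t)/(1+x)) ^ n * ∑ pv ∈ (univ : Finset (Finset (Fin n) × Finset (Fin n))).filter
          (fun pv => PV.Dm pv.1 pv.2),
        (q ^ (PV.dA pv.1 pv.2 - pv.1.card)
          * ((1+x)^2*t/((x+t)*(1+x*t))) ^ ((pv.2 \ pv.1).card)
          * (q*(x+t)/(1+x*t)) ^ pv.1.card
          * ((1+x)*r/(1+x*t)) ^ ((PV.fixSet pv.1 pv.2).card)) := by
        rw [Finset.mul_sum]
    _ = ((1 + x * t) / (1 + x)) ^ n *
        ∑ σ ∈ Finset.univ.filter (fun σ : Equiv.Perm (Fin n) => Avoids321 σ),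
          q ^ cros σ * ((1 + x) ^ 2 * t / ((x + t) * (1 + x * t))) ^ cpk σ *
            (q * (x + t) / (1 + x * t)) ^ exc σ *
            ((1 + x) * r / (1 + x * t)) ^ fixc σ := by
        rw [← hR]

end EulerExc
end
end

section
/- For every integer n ≥ 1, every real number t ≠ 0 and all real q, one has Σ_{σ∈S_n(321)} t^{exc σ + fix σ} q^{inv σ} = t^n · Σ_{σ∈S_{n−1}(321)} (q/t)^{exc σ} q^{inv σ} (1 + q/t)^{fix σ}. -/
open Finset

open scoped Classical

noncomputable section

namespace EulerExc

variable {n : ℕ}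

variable {N m : ℕ}

lemma count_lt (y : Fin N) : ((univ : Finset (Fin N)).filter fun x => x < y).card = (y : ℕ) := by
  have : ((univ : Finset (Fin N)).filter fun x => x < y) = Finset.Iio y := by ext x; simp
  rw [this, Fin.card_Iio]

lemma count_val_lt (σ : Equiv.Perm (Fin N)) (y : Fin N) :
    ((univ : Finset (Fin N)).filter fun x => σ x < y).card = (y : ℕ) := by
  rw [← count_lt y]
  apply Finset.card_nbij σ
  · intro a ha; simp only [mem_coe, mem_filter, mem_univ, true_and] at *; exact ha
  · intro a _ b _ h; exact σ.injective h
  · intro b hb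
    simp only [coe_filter, Set.mem_setOf_eq, mem_univ, true_and] at hb ⊢
    exact ⟨σ.symm b, by simpa using hb, by simp⟩

/-- key lemma: in a 321-avoiding permutation there is no inversion ending at a
weak excedance. -/
lemma no_inv_at_wex {σ : Equiv.Perm (Fin N)} (hA : Avoids321 σ) {i j : Fin N}
    (hij : i < j) (hj : j ≤ σ j) : σ i < σ j := by
  rcases lt_trichotomy (σ i) (σ j) with h | h | h
  · exact h
  · exact absurd (σ.injective h) hij.ne
  -- σ j < σ i : find k > j with σ k < σ j
  exfalso
  have hk : ∃ k, j < k ∧ σ k < σ j := by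
    by_contra hcon
    push_neg at hcon
    have hsub : (univ.filter fun x => σ x < σ j) ⊆ (univ.filter fun x => x < j).erase i := by
      intro x hx
      simp only [mem_filter, mem_univ, true_and] at hx
      rw [mem_erase]
      constructor
      · rintro rfl; exact absurd h (not_lt.2 hx.le)
      simp only [mem_filter, mem_univ, true_and]
      rcases lt_trichotomy x j with h1 | h1 | h1
      · exact h1
      · exact absurd (h1 ▸ hx) (lt_irrefl _)
      · exact absurd hx (not_lt.2 (hcon x h1))
    have h1 := Finset.card_le_card hsub
    rw [count_val_lt] at h1
    have h2 : ((univ.filter fun x => x < j).erase i).card ≤ (j : ℕ) - 1 := by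
      have : i ∈ univ.filter fun x => x < j := by simp [hij]
      rw [Finset.card_erase_of_mem this, count_lt]
    have hj' : (j : ℕ) ≤ (σ j : ℕ) := hj
    have hij' : (i : ℕ) < (j : ℕ) := hij
    omega
  obtain ⟨k, hjk, hk⟩ := hk
  exact hA ⟨i, j, k, hij, hjk, hk, h⟩

/-- key lemma: in a 321-avoiding permutation, everything after a drop is larger. -/
lemma no_inv_after_drop {σ : Equiv.Perm (Fin N)} (hA : Avoids321 σ) {j k : Fin N}
    (hjk : j < k) (hj : σ j < j) : σ j < σ k := by
  rcases lt_trichotomy (σ j) (σ k) with h | h | h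
  · exact h
  · exact absurd (σ.injective h) hjk.ne
  exfalso
  have hi : ∃ i, i < j ∧ σ j < σ i := by
    by_contra hcon
    push_neg at hcon
    have hsub : (univ.filter fun x => x < j) ⊆ (univ.filter fun x => σ x < σ j) := by
      intro x hx
      simp only [mem_filter, mem_univ, true_and] at hx ⊢
      rcases lt_trichotomy (σ x) (σ j) with h1 | h1 | h1
      · exact h1
      · exact absurd (σ.injective h1) hx.ne
      · exact absurd h1 (not_lt.2 (hcon x hx))
    have h1 := Finset.card_le_card hsub
    rw [count_lt, count_val_lt] at h1
    have : (σ j : ℕ) < (j : ℕ) := hj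
    omega
  obtain ⟨i, hijlt, hi⟩ := hi
  exact hA ⟨i, j, k, hijlt, hjk, h, hi⟩


/-- the drop graph of a permutation -/
def dG (σ : Equiv.Perm (Fin N)) : Finset (Fin N × Fin N) :=
  (univ.filter fun i => σ i < i).image fun i => (i, σ i)

lemma card_dG (σ : Equiv.Perm (Fin N)) :
    (dG σ).card = (univ.filter fun i => σ i < i).card := by
  apply Finset.card_image_of_injOn
  intro a _ b _ h
  exact congrArg Prod.fst h

lemma partition_three (σ : Equiv.Perm (Fin N)) :
    exc σ + fixc σ + (univ.filter fun i => σ i < i).card = N := by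
  have h1 := Finset.card_filter_add_card_filter_not (s := (univ : Finset (Fin N)))
      (p := fun i => i < σ i)
  have h2 : (univ.filter fun i : Fin N => ¬ i < σ i)
      = (univ.filter fun i : Fin N => σ i = i) ∪ (univ.filter fun i : Fin N => σ i < i) := by
    rw [← Finset.filter_or]
    apply Finset.filter_congr
    intro x _
    constructor
    · intro h; rcases lt_trichotomy (σ x) x with h' | h' | h'
      · exact Or.inr h'
      · exact Or.inl h'
      · exact absurd h' h
    · rintro (h | h) <;> simp [h, le_of_lt, not_lt]
  have h3 : Disjoint (univ.filter fun i : Fin N => σ i = i)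
      (univ.filter fun i : Fin N => σ i < i) := by
    rw [Finset.disjoint_filter]
    intro x _ h
    simp [h]
  rw [h2, Finset.card_union_of_disjoint h3] at h1
  simp only [exc, fixc, Finset.card_univ, Fintype.card_fin] at h1 ⊢
  omega

lemma inv_eq_sum_dG {σ : Equiv.Perm (Fin N)} (hA : Avoids321 σ) :
    inv σ = ∑ x ∈ dG σ, ((x.1 : ℕ) - (x.2 : ℕ)) := by
  have step1 : inv σ = ∑ j : Fin N, ((univ.filter fun i => i < j ∧ σ j < σ i).card) := by
    rw [inv, Finset.card_eq_sum_card_fiberwise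
      (f := fun p : Fin N × Fin N => p.2) (t := univ) (fun x _ => mem_univ _)]
    apply Finset.sum_congr rfl
    intro j _
    apply Finset.card_nbij (fun p : Fin N × Fin N => p.1)
    · rintro ⟨a, b⟩ hab
      simp only [mem_coe, mem_filter, mem_univ, true_and] at hab ⊢
      obtain ⟨⟨h1, h2⟩, rfl⟩ := hab
      exact ⟨h1, h2⟩
    · rintro ⟨a, b⟩ hab ⟨c, d⟩ hcd h
      simp only [coe_filter, Set.mem_setOf_eq] at hab hcd
      simp only at h
      subst h; rw [hab.2, hcd.2]
    · intro i hi
      simp only [coe_filter, Set.mem_setOf_eq, mem_univ, true_and] at hi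
      refine ⟨(i, j), ?_, rfl⟩
      simp only [mem_coe, mem_filter, mem_univ, true_and]
      exact ⟨⟨hi.1, hi.2⟩, trivial⟩
  rw [step1]
  have step2 : ∀ j : Fin N, ¬ σ j < j →
      ((univ.filter fun i => i < j ∧ σ j < σ i).card) = 0 := by
    intro j hj
    rw [Finset.card_eq_zero, Finset.filter_eq_empty_iff]
    intro i _
    rintro ⟨h1, h2⟩
    exact absurd (no_inv_at_wex hA h1 (not_lt.1 hj)) (not_lt.2 h2.le)
  have step3 : ∀ j : Fin N, σ j < j →
      ((univ.filter fun i => i < j ∧ σ j < σ i).card) = (j : ℕ) - (σ j : ℕ) := by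
    intro j hj
    have e1 : (univ.filter fun i => i < j ∧ σ i < σ j) = univ.filter fun i => σ i < σ j := by
      apply Finset.filter_congr
      intro x _
      constructor
      · exact fun h => h.2
      · intro h
        refine ⟨?_, h⟩
        rcases lt_trichotomy x j with h1 | h1 | h1
        · exact h1
        · subst h1; exact absurd h (lt_irrefl _)
        · exact absurd (no_inv_after_drop hA h1 hj) (not_lt.2 h.le)
    have e2 := Finset.card_filter_add_card_filter_not
      (s := univ.filter fun i : Fin N => i < j) (p := fun i => σ i < σ j)
    rw [Finset.filter_filter, Finset.filter_filter] at e2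
    have e3 : (univ.filter fun i : Fin N => i < j ∧ ¬ σ i < σ j)
        = univ.filter fun i => i < j ∧ σ j < σ i := by
      apply Finset.filter_congr
      intro x _
      constructor
      · rintro ⟨h1, h2⟩
        refine ⟨h1, ?_⟩
        rcases lt_trichotomy (σ x) (σ j) with h3 | h3 | h3
        · exact absurd h3 h2
        · exact absurd (σ.injective h3) h1.ne
        · exact h3
      · rintro ⟨h1, h2⟩; exact ⟨h1, not_lt.2 h2.le⟩
    rw [e3] at e2
    have e4 : (univ.filter fun i : Fin N => i < j ∧ σ i < σ j).card = (σ j : ℕ) := by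
      rw [e1, count_val_lt]
    rw [count_lt] at e2
    omega
  rw [dG, Finset.sum_image (by intro a _ b _ h; exact congrArg Prod.fst h)]
  rw [← Finset.sum_filter_add_sum_filter_not univ (fun j => σ j < j)]
  have z : ∑ j ∈ univ.filter fun j : Fin N => ¬ σ j < j,
      ((univ.filter fun i => i < j ∧ σ j < σ i).card) = 0 := by
    apply Finset.sum_eq_zero
    intro j hj
    simp only [mem_filter] at hj
    exact step2 j hj.2
  rw [z, add_zero]
  apply Finset.sum_congr rfl
  intro j hj
  simp only [mem_filter] at hj
  exact step3 j hj.2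


lemma count_le (y : Fin N) : ((univ : Finset (Fin N)).filter fun x => x ≤ y).card = (y : ℕ) + 1 := by
  have : ((univ : Finset (Fin N)).filter fun x => x ≤ y) = Finset.Iic y := by ext x; simp
  rw [this, Fin.card_Iic]

lemma compl_filter_card (s : Finset (Fin N)) (p : Fin N → Prop) [DecidablePred p] :
    ((sᶜ).filter p).card + (s.filter p).card = ((univ : Finset (Fin N)).filter p).card := by
  have hu : (sᶜ.filter p) ∪ (s.filter p) = univ.filter p := by
    ext x; by_cases hx : x ∈ s <;> simp [hx]
  have hd : Disjoint (sᶜ.filter p) (s.filter p) := by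
    rw [Finset.disjoint_left]
    intro a ha ha'
    simp only [mem_filter, Finset.mem_compl] at ha ha'
    exact ha.1 ha'.1
  rw [← Finset.card_union_of_disjoint hd, hu]

/-- the monotone filling bijection between two finsets of the same cardinality -/
def fill (s t : Finset (Fin N)) (x : Fin N) : Fin N :=
  if hx : x ∈ s ∧ s.card = t.card then
    ((t.orderIsoOfFin hx.2.symm) ((s.orderIsoOfFin rfl).symm ⟨x, hx.1⟩) : Fin N)
  else x

variable {s t : Finset (Fin N)}

lemma fill_mem (h : s.card = t.card) {x : Fin N} (hx : x ∈ s) : fill s t x ∈ t := by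
  rw [fill, dif_pos ⟨hx, h⟩]
  exact Subtype.coe_prop _

lemma fill_lt_fill (h : s.card = t.card) {x y : Fin N} (hx : x ∈ s) (hy : y ∈ s)
    (hxy : x < y) : fill s t x < fill s t y := by
  rw [fill, dif_pos ⟨hx, h⟩, fill, dif_pos ⟨hy, h⟩]
  exact Subtype.coe_lt_coe.2 ((t.orderIsoOfFin h.symm).lt_iff_lt.2
    ((s.orderIsoOfFin rfl).symm.lt_iff_lt.2 (Subtype.mk_lt_mk.2 hxy)))

lemma fill_surjOn (h : s.card = t.card) {y : Fin N} (hy : y ∈ t) :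
    ∃ x ∈ s, fill s t x = y := by
  set idx := (t.orderIsoOfFin h.symm).symm ⟨y, hy⟩ with hidx
  refine ⟨((s.orderIsoOfFin rfl) idx : Fin N), Subtype.coe_prop _, ?_⟩
  rw [fill, dif_pos ⟨Subtype.coe_prop _, h⟩]
  have h1 : (⟨((s.orderIsoOfFin rfl) idx : Fin N), Subtype.coe_prop _⟩ :
      {a // a ∈ s}) = (s.orderIsoOfFin rfl) idx := Subtype.ext rfl
  rw [h1, OrderIso.symm_apply_apply, hidx, OrderIso.apply_symm_apply]

/-- rank preservation for monotone surjections -/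
lemma rank_eq {g : Fin N → Fin N} (hmap : ∀ a ∈ s, g a ∈ t)
    (hmono : ∀ a ∈ s, ∀ b ∈ s, a < b → g a < g b)
    (hsurj : ∀ b ∈ t, ∃ a ∈ s, g a = b) {x : Fin N} (hx : x ∈ s) :
    (t.filter (· < g x)).card = (s.filter (· < x)).card := by
  symm
  apply Finset.card_nbij g
  · intro a ha
    simp only [mem_coe, mem_filter] at ha ⊢
    exact ⟨hmap a ha.1, hmono a ha.1 x hx ha.2⟩
  · intro a ha b hb hab
    simp only [coe_filter, Set.mem_setOf_eq] at ha hb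
    rcases lt_trichotomy a b with h1 | h1 | h1
    · exact absurd (hab ▸ hmono a ha.1 b hb.1 h1) (lt_irrefl _)
    · exact h1
    · exact absurd (hab ▸ hmono b hb.1 a ha.1 h1) (lt_irrefl _)
  · intro b hb
    simp only [coe_filter, Set.mem_setOf_eq] at hb
    obtain ⟨a, ha, rfl⟩ := hsurj b hb.1
    refine ⟨a, ?_, rfl⟩
    simp only [coe_filter, Set.mem_setOf_eq]
    refine ⟨ha, ?_⟩
    rcases lt_trichotomy a x with h1 | h1 | h1
    · exact h1
    · subst h1; exact absurd hb.2 (lt_irrefl _)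
    · exact absurd (hmono x hx a ha h1) (not_lt.2 hb.2.le)

lemma filter_lt_ssubset {y y' : Fin N} (hy : y ∈ t) (h1 : y < y') :
    t.filter (· < y) ⊂ t.filter (· < y') := by
  have hsub : t.filter (· < y) ⊆ t.filter (· < y') := by
    intro z hz; simp only [mem_filter] at hz ⊢; exact ⟨hz.1, hz.2.trans h1⟩
  rw [Finset.ssubset_iff_of_subset hsub]
  exact ⟨y, by simp [hy, h1], by simp⟩

lemma rank_injOn {y y' : Fin N} (hy : y ∈ t) (hy' : y' ∈ t)
    (h : (t.filter (· < y)).card = (t.filter (· < y')).card) : y = y' := by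
  rcases lt_trichotomy y y' with h1 | h1 | h1
  · exact absurd h (Finset.card_lt_card (filter_lt_ssubset hy h1)).ne
  · exact h1
  · exact absurd h.symm (Finset.card_lt_card (filter_lt_ssubset hy' h1)).ne

lemma mono_unique {g₁ g₂ : Fin N → Fin N}
    (hmap₁ : ∀ a ∈ s, g₁ a ∈ t) (hmono₁ : ∀ a ∈ s, ∀ b ∈ s, a < b → g₁ a < g₁ b)
    (hsurj₁ : ∀ b ∈ t, ∃ a ∈ s, g₁ a = b)
    (hmap₂ : ∀ a ∈ s, g₂ a ∈ t) (hmono₂ : ∀ a ∈ s, ∀ b ∈ s, a < b → g₂ a < g₂ b)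
    (hsurj₂ : ∀ b ∈ t, ∃ a ∈ s, g₂ a = b) {x : Fin N} (hx : x ∈ s) : g₁ x = g₂ x :=
  rank_injOn (hmap₁ x hx) (hmap₂ x hx)
    ((rank_eq hmap₁ hmono₁ hsurj₁ hx).trans (rank_eq hmap₂ hmono₂ hsurj₂ hx).symm)


lemma le_fill_of {P W : Finset (Fin N)} (h : Pᶜ.card = Wᶜ.card)
    (key : ∀ y : Fin N, (P.filter (· ≤ y)).card ≤ (W.filter (· < y)).card)
    {x : Fin N} (hx : x ∈ Pᶜ) : x ≤ fill Pᶜ Wᶜ x := by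
  by_contra hlt
  push_neg at hlt
  set y := fill Pᶜ Wᶜ x with hy
  have hym : y ∈ Wᶜ := fill_mem h hx
  have hr : ((Wᶜ).filter (· < y)).card = ((Pᶜ).filter (· < x)).card :=
    rank_eq (fun a ha => fill_mem h ha) (fun a ha b hb hab => fill_lt_fill h ha hb hab)
      (fun b hb => fill_surjOn h hb) hx
  have c1 := compl_filter_card P (fun z => z ≤ y)
  have c2 := compl_filter_card W (fun z => z < y)
  have u1 := count_le y
  have u2 := count_lt y
  have c3 : ((Pᶜ).filter (· ≤ y)) ⊆ ((Pᶜ).filter (· < x)) := by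
    intro z hz; simp only [mem_filter] at hz ⊢; exact ⟨hz.1, lt_of_le_of_lt hz.2 hlt⟩
  have c4 := Finset.card_le_card c3
  have c5 := key y
  omega

lemma fill_le_of {P W : Finset (Fin N)} (h : Pᶜ.card = Wᶜ.card)
    (key : ∀ x ∈ (Pᶜ : Finset (Fin N)), (W.filter (· ≤ x)).card ≤ (P.filter (· < x)).card)
    {x : Fin N} (hx : x ∈ Pᶜ) : fill Pᶜ Wᶜ x ≤ x := by
  by_contra hlt
  push_neg at hlt
  set y := fill Pᶜ Wᶜ x with hy
  have hym : y ∈ Wᶜ := fill_mem h hx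
  have hr : ((Wᶜ).filter (· < y)).card = ((Pᶜ).filter (· < x)).card :=
    rank_eq (fun a ha => fill_mem h ha) (fun a ha b hb hab => fill_lt_fill h ha hb hab)
      (fun b hb => fill_surjOn h hb) hx
  have c1 := compl_filter_card W (fun z => z ≤ x)
  have c2 := compl_filter_card P (fun z => z < x)
  have u1 := count_le x
  have u2 := count_lt x
  have c3 : ((Wᶜ).filter (· ≤ x)) ⊆ ((Wᶜ).filter (· < y)) := by
    intro z hz; simp only [mem_filter] at hz ⊢; exact ⟨hz.1, lt_of_le_of_lt hz.2 hlt⟩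
  have c4 := Finset.card_le_card c3
  have c5 := key x hx
  omega

/-! ### building a 321-avoiding permutation from a pair set -/

def pos (e : Finset (Fin N × Fin N)) : Finset (Fin N) := e.image Prod.fst
def vls (e : Finset (Fin N × Fin N)) : Finset (Fin N) := e.image Prod.snd

variable {e : Finset (Fin N × Fin N)}

section
variable (hfun : ∀ x ∈ e, ∀ y ∈ e, x.1 = y.1 → x = y)
variable (hmono : ∀ x ∈ e, ∀ y ∈ e, x.1 < y.1 → x.2 < y.2)

include hfun hmono in
lemma snd_inj : ∀ x ∈ e, ∀ y ∈ e, x.2 = y.2 → x = y := by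
  intro x hx y hy h
  rcases lt_trichotomy x.1 y.1 with h1 | h1 | h1
  · exact absurd (h ▸ hmono x hx y hy h1) (lt_irrefl _)
  · exact hfun x hx y hy h1
  · exact absurd (h ▸ hmono y hy x hx h1) (lt_irrefl _)

include hfun in
lemma card_pos_eq : (pos e).card = e.card :=
  Finset.card_image_of_injOn fun x hx y hy h => hfun x hx y hy h

include hfun hmono in
lemma card_vls_eq : (vls e).card = e.card :=
  Finset.card_image_of_injOn fun x hx y hy h => snd_inj hfun hmono x hx y hy h

include hfun hmono in
lemma card_compl_eq : ((pos e)ᶜ : Finset (Fin N)).card = ((vls e)ᶜ).card := by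
  rw [Finset.card_compl, Finset.card_compl, card_pos_eq hfun, card_vls_eq hfun hmono]

end

def buildFun (e : Finset (Fin N × Fin N)) : Fin N → Fin N := fun i =>
  if h : ∃ w, (i, w) ∈ e then h.choose else fill ((pos e)ᶜ) ((vls e)ᶜ) i

lemma mem_pos_iff {i : Fin N} : i ∈ pos e ↔ ∃ w, (i, w) ∈ e := by
  constructor
  · intro h
    obtain ⟨x, hx, h⟩ := Finset.mem_image.1 h
    exact ⟨x.2, by rwa [← h, Prod.mk.eta]⟩
  · rintro ⟨w, hw⟩
    exact Finset.mem_image.2 ⟨(i, w), hw, rfl⟩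

lemma mem_vls_iff {v : Fin N} : v ∈ vls e ↔ ∃ p, (p, v) ∈ e := by
  constructor
  · intro h
    obtain ⟨x, hx, h⟩ := Finset.mem_image.1 h
    exact ⟨x.1, by rwa [← h, Prod.mk.eta]⟩
  · rintro ⟨p, hp⟩
    exact Finset.mem_image.2 ⟨(p, v), hp, rfl⟩

lemma buildFun_pair {i : Fin N} (hi : i ∈ pos e) : (i, buildFun e i) ∈ e := by
  rw [buildFun]
  have h := mem_pos_iff.1 hi
  rw [dif_pos h]
  exact h.choose_spec

lemma buildFun_eq_of_mem (hfun : ∀ x ∈ e, ∀ y ∈ e, x.1 = y.1 → x = y)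
    {i w : Fin N} (hiw : (i, w) ∈ e) : buildFun e i = w := by
  have hi : i ∈ pos e := mem_pos_iff.2 ⟨w, hiw⟩
  have := hfun _ (buildFun_pair hi) _ hiw rfl
  exact congrArg Prod.snd this

lemma buildFun_not_mem {i : Fin N} (hi : i ∉ pos e) :
    buildFun e i = fill ((pos e)ᶜ) ((vls e)ᶜ) i := by
  rw [buildFun, dif_neg]
  exact fun h => hi (mem_pos_iff.2 h)

lemma buildFun_mem_vls {i : Fin N} (hi : i ∈ pos e) : buildFun e i ∈ vls e :=
  mem_vls_iff.2 ⟨i, buildFun_pair hi⟩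

section
variable (hfun : ∀ x ∈ e, ∀ y ∈ e, x.1 = y.1 → x = y)
variable (hmono : ∀ x ∈ e, ∀ y ∈ e, x.1 < y.1 → x.2 < y.2)

include hfun hmono in
lemma buildFun_mem_vlsc {i : Fin N} (hi : i ∉ pos e) : buildFun e i ∈ ((vls e)ᶜ) := by
  rw [buildFun_not_mem hi]
  exact fill_mem (card_compl_eq hfun hmono) (Finset.mem_compl.2 hi)

include hfun hmono in
lemma buildFun_inj : Function.Injective (buildFun e) := by
  intro a b h
  by_cases ha : a ∈ pos e <;> by_cases hb : b ∈ pos e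
  · have h1 := buildFun_pair ha
    have h2 := buildFun_pair hb
    rw [← h] at h2
    have := snd_inj hfun hmono _ h1 _ h2 rfl
    exact congrArg Prod.fst this
  · exact absurd (h ▸ buildFun_mem_vls ha) (Finset.mem_compl.1 (buildFun_mem_vlsc hfun hmono hb))
  · exact absurd (h.symm ▸ buildFun_mem_vls hb)
      (Finset.mem_compl.1 (buildFun_mem_vlsc hfun hmono ha))
  · rw [buildFun_not_mem ha, buildFun_not_mem hb] at h
    rcases lt_trichotomy a b with h1 | h1 | h1
    · exact absurd (h ▸ fill_lt_fill (card_compl_eq hfun hmono) (Finset.mem_compl.2 ha)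
        (Finset.mem_compl.2 hb) h1) (lt_irrefl _)
    · exact h1
    · exact absurd (h ▸ fill_lt_fill (card_compl_eq hfun hmono) (Finset.mem_compl.2 hb)
        (Finset.mem_compl.2 ha) h1) (lt_irrefl _)

def buildPerm (e : Finset (Fin N × Fin N))
    (hfun : ∀ x ∈ e, ∀ y ∈ e, x.1 = y.1 → x = y)
    (hmono : ∀ x ∈ e, ∀ y ∈ e, x.1 < y.1 → x.2 < y.2) : Equiv.Perm (Fin N) :=
  Equiv.ofBijective (buildFun e) (Finite.injective_iff_bijective.1 (buildFun_inj hfun hmono))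

lemma buildPerm_apply (i : Fin N) : buildPerm e hfun hmono i = buildFun e i := rfl

include hfun hmono in
lemma buildPerm_avoids : Avoids321 (buildPerm e hfun hmono) := by
  rintro ⟨i, j, k, hij, hjk, h1, h2⟩
  set σ := buildPerm e hfun hmono with hσ
  have inmono : ∀ a b : Fin N, a ∈ pos e → b ∈ pos e → a < b → σ a < σ b := by
    intro a b ha hb hab
    exact hmono _ (buildFun_pair ha) _ (buildFun_pair hb) hab
  have outmono : ∀ a b : Fin N, a ∉ pos e → b ∉ pos e → a < b → σ a < σ b := by
    intro a b ha hb hab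
    show buildFun e a < buildFun e b
    rw [buildFun_not_mem ha, buildFun_not_mem hb]
    exact fill_lt_fill (card_compl_eq hfun hmono) (Finset.mem_compl.2 ha)
      (Finset.mem_compl.2 hb) hab
  have hik : i < k := hij.trans hjk
  have hki : σ k < σ i := h1.trans h2
  by_cases hi : i ∈ pos e <;> by_cases hj : j ∈ pos e <;> by_cases hk : k ∈ pos e
  · exact absurd (inmono i j hi hj hij) (not_lt.2 h2.le)
  · exact absurd (inmono i j hi hj hij) (not_lt.2 h2.le)
  · exact absurd (inmono i k hi hk hik) (not_lt.2 hki.le)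
  · exact absurd (outmono j k hj hk hjk) (not_lt.2 h1.le)
  · exact absurd (inmono j k hj hk hjk) (not_lt.2 h1.le)
  · exact absurd (outmono i k hi hk hik) (not_lt.2 hki.le)
  · exact absurd (outmono i j hi hj hij) (not_lt.2 h2.le)
  · exact absurd (outmono i j hi hj hij) (not_lt.2 h2.le)

/-! ### drop version: pairs with value < position -/

include hfun hmono in
lemma build_drop (hdrop : ∀ x ∈ e, x.2 < x.1) {i : Fin N} (hi : i ∈ pos e) :
    buildPerm e hfun hmono i < i :=
  hdrop _ (buildFun_pair hi)

include hfun hmono in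
lemma build_nondrop (hdrop : ∀ x ∈ e, x.2 < x.1) {i : Fin N} (hi : i ∉ pos e) :
    i ≤ buildPerm e hfun hmono i := by
  show i ≤ buildFun e i
  rw [buildFun_not_mem hi]
  apply le_fill_of (card_compl_eq hfun hmono) ?_ (Finset.mem_compl.2 hi)
  intro y
  apply Finset.card_le_card_of_injOn (buildFun e)
  · intro a ha
    simp only [mem_coe, mem_filter] at ha ⊢
    refine ⟨buildFun_mem_vls ha.1, lt_of_lt_of_le (hdrop _ (buildFun_pair ha.1)) ha.2⟩
  · intro a _ b _ h
    exact buildFun_inj hfun hmono h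

include hfun hmono in
lemma build_dG (hdrop : ∀ x ∈ e, x.2 < x.1) : dG (buildPerm e hfun hmono) = e := by
  ext x
  simp only [dG, Finset.mem_image, mem_filter, mem_univ, true_and]
  constructor
  · rintro ⟨i, hdi, rfl⟩
    by_cases hi : i ∈ pos e
    · exact buildFun_pair hi
    · exact absurd hdi (not_lt.2 (build_nondrop hfun hmono hdrop hi))
  · intro hx
    have hp : x.1 ∈ pos e := mem_pos_iff.2 ⟨x.2, by rwa [Prod.mk.eta]⟩
    refine ⟨x.1, build_drop hfun hmono hdrop hp, ?_⟩
    have : buildFun e x.1 = x.2 := buildFun_eq_of_mem hfun (by rwa [Prod.mk.eta])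
    rw [buildPerm_apply, this]

/-! ### weak excedance version: pairs with position ≤ value -/

include hfun hmono in
lemma build_wex (hwex : ∀ x ∈ e, x.1 ≤ x.2) {i : Fin N} (hi : i ∈ pos e) :
    i ≤ buildPerm e hfun hmono i :=
  hwex _ (buildFun_pair hi)

include hfun hmono in
lemma build_nonwex (hwex : ∀ x ∈ e, x.1 ≤ x.2) {i : Fin N} (hi : i ∉ pos e) :
    buildPerm e hfun hmono i ≤ i := by
  show buildFun e i ≤ i
  rw [buildFun_not_mem hi]
  apply fill_le_of (card_compl_eq hfun hmono) ?_ (Finset.mem_compl.2 hi)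
  intro x hx
  apply Finset.card_le_card_of_injOn (buildPerm e hfun hmono).symm
  · intro v hv
    simp only [mem_coe, mem_filter] at hv ⊢
    obtain ⟨p, hp⟩ := mem_vls_iff.1 hv.1
    have hσp : buildPerm e hfun hmono p = v := buildFun_eq_of_mem hfun hp
    have hs : (buildPerm e hfun hmono).symm v = p := by
      rw [← hσp]; exact Equiv.symm_apply_apply _ _
    rw [hs]
    have hpp : p ∈ pos e := mem_pos_iff.2 ⟨v, hp⟩
    refine ⟨hpp, ?_⟩
    have hple : p ≤ v := hwex _ hp
    have hpx : p ≠ x := by rintro rfl; exact (Finset.mem_compl.1 hx) hpp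
    exact lt_of_le_of_ne (hple.trans hv.2) hpx
  · intro a _ b _ h
    exact (buildPerm e hfun hmono).symm.injective h

end


lemma avoids_inv {σ : Equiv.Perm (Fin N)} (h : Avoids321 σ) : Avoids321 σ⁻¹ := by
  rintro ⟨i, j, k, h1, h2, h3, h4⟩
  refine h ⟨σ⁻¹ k, σ⁻¹ j, σ⁻¹ i, h3, h4, ?_, ?_⟩ <;> simp [h1, h2]

lemma inv_inv_perm (σ : Equiv.Perm (Fin N)) : inv σ⁻¹ = inv σ := by
  symm
  apply Finset.card_nbij (fun p : Fin N × Fin N => (σ p.2, σ p.1))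
  · rintro ⟨i, j⟩ hij
    simp only [mem_coe, mem_filter, mem_univ, true_and] at hij ⊢
    exact ⟨hij.2, by simpa using hij.1⟩
  · rintro ⟨a, b⟩ _ ⟨c, d⟩ _ h
    simp only [Prod.mk.injEq] at h
    exact Prod.ext (σ.injective h.2) (σ.injective h.1)
  · rintro ⟨a, b⟩ hab
    simp only [coe_filter, Set.mem_setOf_eq, mem_univ, true_and] at hab
    refine ⟨(σ⁻¹ b, σ⁻¹ a), ?_, by simp⟩
    simp only [coe_filter, Set.mem_setOf_eq, mem_univ, true_and]
    exact ⟨by simpa using hab.2, by simpa using hab.1⟩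

lemma mem_dG_iff {σ : Equiv.Perm (Fin N)} {x : Fin N × Fin N} :
    x ∈ dG σ ↔ σ x.1 < x.1 ∧ x.2 = σ x.1 := by
  simp only [dG, Finset.mem_image, mem_filter, mem_univ, true_and]
  constructor
  · rintro ⟨i, hi, rfl⟩; exact ⟨hi, rfl⟩
  · rintro ⟨h1, h2⟩; exact ⟨x.1, h1, by rw [← h2, Prod.mk.eta]⟩

lemma image_nondrop {σ : Equiv.Perm (Fin N)} :
    (univ.filter fun x => ¬ σ x < x).image σ = ((vls (dG σ))ᶜ : Finset (Fin N)) := by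
  ext v
  simp only [Finset.mem_image, mem_filter, mem_univ, true_and, Finset.mem_compl, vls]
  constructor
  · rintro ⟨a, ha, rfl⟩ hv
    obtain ⟨x, hx, hx2⟩ := hv
    rw [mem_dG_iff] at hx
    have : x.1 = a := σ.injective (hx2 ▸ hx.2.symm)
    exact ha (this ▸ hx.1)
  · intro hv
    refine ⟨σ⁻¹ v, ?_, by simp⟩
    intro hd
    exact hv ⟨(σ⁻¹ v, v), mem_dG_iff.2 ⟨by simpa using hd, by simp⟩, rfl⟩

lemma unique_of_dG {σ₁ σ₂ : Equiv.Perm (Fin N)} (h₁ : Avoids321 σ₁) (h₂ : Avoids321 σ₂)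
    (h : dG σ₁ = dG σ₂) : σ₁ = σ₂ := by
  have hdrop : ∀ i, σ₁ i < i ↔ σ₂ i < i := by
    intro i
    constructor
    · intro hi
      have : (i, σ₁ i) ∈ dG σ₂ := h ▸ mem_dG_iff.2 ⟨hi, rfl⟩
      exact (mem_dG_iff.1 this).1
    · intro hi
      have : (i, σ₂ i) ∈ dG σ₁ := h ▸ mem_dG_iff.2 ⟨hi, rfl⟩
      exact (mem_dG_iff.1 this).1
  have hval : ∀ i, σ₁ i < i → σ₁ i = σ₂ i := by
    intro i hi
    have : (i, σ₁ i) ∈ dG σ₂ := h ▸ mem_dG_iff.2 ⟨hi, rfl⟩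
    exact (mem_dG_iff.1 this).2
  apply Equiv.ext
  intro i
  by_cases hi : σ₁ i < i
  · exact hval i hi
  · set s : Finset (Fin N) := univ.filter fun x => ¬ σ₁ x < x with hs
    have hseq : s = univ.filter fun x => ¬ σ₂ x < x := by
      apply Finset.filter_congr; intro x _; simp [hdrop x]
    set tt : Finset (Fin N) := ((vls (dG σ₁))ᶜ : Finset (Fin N)) with htt
    have him1 : s.image σ₁ = tt := image_nondrop
    have him2 : s.image σ₂ = tt := by
      rw [hseq, htt, h]; exact image_nondrop
    have hmem : ∀ (τ : Equiv.Perm (Fin N)), s.image τ = tt →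
        (∀ a ∈ s, τ a ∈ tt) ∧ (∀ b ∈ tt, ∃ a ∈ s, τ a = b) := by
      intro τ hτ
      constructor
      · intro a ha; rw [← hτ]; exact Finset.mem_image_of_mem τ ha
      · intro b hb; rw [← hτ] at hb; exact Finset.mem_image.1 hb
    have hmono1 : ∀ a ∈ s, ∀ b ∈ s, a < b → σ₁ a < σ₁ b := by
      intro a ha b hb hab
      simp only [hs, mem_filter, mem_univ, true_and, not_lt] at hb
      exact no_inv_at_wex h₁ hab hb
    have hmono2 : ∀ a ∈ s, ∀ b ∈ s, a < b → σ₂ a < σ₂ b := by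
      intro a ha b hb hab
      rw [hseq] at hb
      simp only [mem_filter, mem_univ, true_and, not_lt] at hb
      exact no_inv_at_wex h₂ hab hb
    exact mono_unique (hmem σ₁ him1).1 hmono1 (hmem σ₁ him1).2
      (hmem σ₂ him2).1 hmono2 (hmem σ₂ him2).2
      (by simp only [hs, mem_filter, mem_univ, true_and]; exact hi)

lemma dG_inv_eq (σ : Equiv.Perm (Fin N)) :
    dG σ⁻¹ = (univ.filter fun p => p < σ p).image fun p => (σ p, p) := by
  ext x
  rw [mem_dG_iff]
  simp only [Finset.mem_image, mem_filter, mem_univ, true_and]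
  constructor
  · rintro ⟨h1, h2⟩
    refine ⟨σ⁻¹ x.1, by simpa using h1, ?_⟩
    rw [Prod.ext_iff]
    exact ⟨by simp, h2.symm⟩
  · rintro ⟨p, hp, rfl⟩
    simp [hp]

lemma inv_eq_sum_exc {σ : Equiv.Perm (Fin N)} (h : Avoids321 σ) :
    inv σ = ∑ p ∈ univ.filter fun p => p < σ p, ((σ p : ℕ) - (p : ℕ)) := by
  rw [← inv_inv_perm, inv_eq_sum_dG (avoids_inv h), dG_inv_eq]
  rw [Finset.sum_image]
  intro a _ b _ hab
  exact σ.injective (congrArg Prod.fst hab)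


def Dset (N : ℕ) : Finset (Finset (Fin N × Fin N)) :=
  univ.filter fun d =>
    (∀ x ∈ d, x.2 < x.1) ∧ (∀ x ∈ d, ∀ y ∈ d, x.1 < y.1 → x.2 < y.2) ∧
    (∀ x ∈ d, ∀ y ∈ d, x.1 = y.1 → x = y)

lemma mem_Dset {d : Finset (Fin N × Fin N)} :
    d ∈ Dset N ↔ (∀ x ∈ d, x.2 < x.1) ∧ (∀ x ∈ d, ∀ y ∈ d, x.1 < y.1 → x.2 < y.2) ∧
      (∀ x ∈ d, ∀ y ∈ d, x.1 = y.1 → x = y) := by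
  simp [Dset]

lemma lhs_eq (q t : ℝ) :
    ∑ σ ∈ Finset.univ.filter (fun σ : Equiv.Perm (Fin N) => Avoids321 σ),
        t ^ (exc σ + fixc σ) * q ^ inv σ =
      ∑ d ∈ Dset N, t ^ (N - d.card) * q ^ (∑ x ∈ d, ((x.1 : ℕ) - (x.2 : ℕ))) := by
  apply Finset.sum_nbij dG
  · intro σ hσ
    simp only [mem_filter, mem_univ, true_and] at hσ
    rw [mem_Dset]
    refine ⟨?_, ?_, ?_⟩
    · intro x hx
      obtain ⟨i, hi, rfl⟩ := Finset.mem_image.1 hx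
      simp only [mem_filter, mem_univ, true_and] at hi
      exact hi
    · intro x hx y hy hxy
      obtain ⟨i, hi, rfl⟩ := Finset.mem_image.1 hx
      obtain ⟨j, hj, rfl⟩ := Finset.mem_image.1 hy
      simp only [mem_filter, mem_univ, true_and] at hi hj
      exact no_inv_after_drop hσ hxy hi
    · intro x hx y hy hxy
      obtain ⟨i, hi, rfl⟩ := Finset.mem_image.1 hx
      obtain ⟨j, hj, rfl⟩ := Finset.mem_image.1 hy
      simp only at hxy
      subst hxy
      rfl
  · intro σ₁ h₁ σ₂ h₂ h
    simp only [coe_filter, Set.mem_setOf_eq, mem_univ, true_and] at h₁ h₂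
    exact unique_of_dG h₁ h₂ h
  · intro d hd
    simp only [mem_coe] at hd
    rw [mem_Dset] at hd
    refine ⟨buildPerm d hd.2.2 hd.2.1, ?_, build_dG hd.2.2 hd.2.1 hd.1⟩
    simp only [coe_filter, Set.mem_setOf_eq, mem_univ, true_and]
    exact buildPerm_avoids hd.2.2 hd.2.1
  · intro σ hσ
    simp only [mem_filter, mem_univ, true_and] at hσ
    have h1 : exc σ + fixc σ = N - (dG σ).card := by
      have := partition_three σ
      have := card_dG σ
      omega
    rw [h1, inv_eq_sum_dG hσ]


/-! ### the B-side map -/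

def TS (σ' : Equiv.Perm (Fin m)) (S : Finset (Fin m)) : Finset (Fin m) :=
  (univ.filter fun p => p < σ' p) ∪ S

def ψm (σ' : Equiv.Perm (Fin m)) (S : Finset (Fin m)) : Finset (Fin (m+1) × Fin (m+1)) :=
  (TS σ' S).image fun p => (p.castSucc.rev, (σ' p).succ.rev)

lemma val_i (p : Fin m) : ((p.castSucc.rev : Fin (m+1)) : ℕ) = m - (p : ℕ) := by
  rw [Fin.val_rev, Fin.coe_castSucc]
  omega

lemma val_w (v : Fin m) : ((v.succ.rev : Fin (m+1)) : ℕ) = m - 1 - (v : ℕ) := by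
  rw [Fin.val_rev, Fin.val_succ]
  omega

lemma first_inj {p q : Fin m} (h : p.castSucc.rev = q.castSucc.rev) : p = q := by
  have h1 := congrArg Fin.val h
  rw [val_i, val_i] at h1
  have := p.isLt; have := q.isLt
  exact Fin.val_injective (by omega)

lemma second_inj {v w : Fin m} (h : v.succ.rev = w.succ.rev) : v = w := by
  have h1 := congrArg Fin.val h
  rw [val_w, val_w] at h1
  have := v.isLt; have := w.isLt
  exact Fin.val_injective (by omega)

section
variable {σ' : Equiv.Perm (Fin m)} {S : Finset (Fin m)}
variable (hσ : Avoids321 σ') (hS : ∀ s ∈ S, σ' s = s)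

include hS in
lemma TS_wex {p : Fin m} (hp : p ∈ TS σ' S) : (p : ℕ) ≤ ((σ' p : Fin m) : ℕ) := by
  rcases Finset.mem_union.1 hp with h | h
  · simp only [mem_filter, mem_univ, true_and] at h
    exact le_of_lt h
  · rw [hS p h]

include hS in
lemma TS_disj : Disjoint (univ.filter fun p => p < σ' p) S := by
  rw [Finset.disjoint_left]
  intro p hp hps
  simp only [mem_filter, mem_univ, true_and] at hp
  rw [hS p hps] at hp
  exact lt_irrefl _ hp

include hS in
lemma card_TS : (TS σ' S).card = exc σ' + S.card := by
  rw [TS, Finset.card_union_of_disjoint (TS_disj hS)]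
  rfl

lemma ψ_injOn_TS : Set.InjOn (fun p : Fin m => ((p.castSucc.rev, (σ' p).succ.rev) :
    Fin (m+1) × Fin (m+1))) (TS σ' S) := by
  intro a _ b _ h
  exact first_inj (congrArg Prod.fst h)

include hS in
lemma card_ψ : (ψm σ' S).card = exc σ' + S.card := by
  rw [ψm, Finset.card_image_of_injOn ψ_injOn_TS, card_TS hS]

include hσ hS in
lemma sum_ψ : ∑ x ∈ ψm σ' S, ((x.1 : ℕ) - (x.2 : ℕ)) = inv σ' + exc σ' + S.card := by
  rw [ψm, Finset.sum_image (fun a ha b hb h => ψ_injOn_TS ha hb h)]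
  have hterm : ∀ p ∈ TS σ' S,
      (((p.castSucc.rev : Fin (m+1)) : ℕ) - (((σ' p).succ.rev : Fin (m+1)) : ℕ))
        = ((σ' p : Fin m) : ℕ) - (p : ℕ) + 1 := by
    intro p hp
    rw [val_i, val_w]
    have h1 := TS_wex hS hp
    have h2 := (σ' p).isLt
    have h3 := p.isLt
    omega
  rw [Finset.sum_congr rfl hterm, Finset.sum_add_distrib, Finset.sum_const, smul_eq_mul,
    mul_one, card_TS hS, TS, Finset.sum_union (TS_disj hS)]
  have hzero : ∑ p ∈ S, (((σ' p : Fin m) : ℕ) - (p : ℕ)) = 0 := by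
    apply Finset.sum_eq_zero
    intro s hs
    rw [hS s hs]
    omega
  rw [hzero, add_zero, ← inv_eq_sum_exc hσ]
  ring

include hσ hS in
lemma ψ_mem_Dset : ψm σ' S ∈ Dset (m+1) := by
  rw [mem_Dset]
  refine ⟨?_, ?_, ?_⟩
  · intro x hx
    obtain ⟨p, hp, rfl⟩ := Finset.mem_image.1 hx
    simp only
    rw [Fin.lt_def, val_i, val_w]
    have h1 := TS_wex hS hp
    have h2 := (σ' p).isLt
    have h3 := p.isLt
    omega
  · intro x hx y hy hxy
    obtain ⟨p, hp, rfl⟩ := Finset.mem_image.1 hx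
    obtain ⟨q, hq, rfl⟩ := Finset.mem_image.1 hy
    simp only at hxy ⊢
    rw [Fin.lt_def, val_i, val_i] at hxy
    have h3 := p.isLt; have h4 := q.isLt
    have hqp : q < p := by rw [Fin.lt_def]; omega
    have hmono : σ' q < σ' p := no_inv_at_wex hσ hqp (by
      rw [Fin.le_def]; exact TS_wex hS hp)
    rw [Fin.lt_def, val_w, val_w]
    rw [Fin.lt_def] at hmono
    have h5 := (σ' p).isLt
    omega
  · intro x hx y hy hxy
    obtain ⟨p, hp, rfl⟩ := Finset.mem_image.1 hx
    obtain ⟨q, hq, rfl⟩ := Finset.mem_image.1 hy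
    simp only at hxy ⊢
    rw [first_inj hxy]

end

lemma S_eq_TS_filter {σ' : Equiv.Perm (Fin m)} {S : Finset (Fin m)}
    (hS : ∀ s ∈ S, σ' s = s) : S = (TS σ' S).filter fun p => σ' p = p := by
  ext p
  simp only [mem_filter, TS, Finset.mem_union, mem_filter, mem_univ, true_and]
  constructor
  · intro hp
    exact ⟨Or.inr hp, hS p hp⟩
  · rintro ⟨h1 | h1, h2⟩
    · rw [h2] at h1; exact absurd h1 (lt_irrefl _)
    · exact h1

lemma ψ_inj {σ₁ σ₂ : Equiv.Perm (Fin m)} {S₁ S₂ : Finset (Fin m)}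
    (h₁ : Avoids321 σ₁) (hS₁ : ∀ s ∈ S₁, σ₁ s = s)
    (h₂ : Avoids321 σ₂) (hS₂ : ∀ s ∈ S₂, σ₂ s = s)
    (h : ψm σ₁ S₁ = ψm σ₂ S₂) : σ₁ = σ₂ ∧ S₁ = S₂ := by
  have step : ∀ {τ₁ τ₂ : Equiv.Perm (Fin m)} {T₁ T₂ : Finset (Fin m)},
      ψm τ₁ T₁ = ψm τ₂ T₂ → ∀ p ∈ TS τ₁ T₁, p ∈ TS τ₂ T₂ ∧ τ₂ p = τ₁ p := by
    intro τ₁ τ₂ T₁ T₂ hψ p hp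
    have hmem : ((p.castSucc.rev, (τ₁ p).succ.rev) : Fin (m+1) × Fin (m+1)) ∈ ψm τ₂ T₂ :=
      hψ ▸ Finset.mem_image_of_mem _ hp
    obtain ⟨q, hq, heq⟩ := Finset.mem_image.1 hmem
    have hpq : q = p := first_inj (congrArg Prod.fst heq)
    subst hpq
    exact ⟨hq, second_inj (congrArg Prod.snd heq)⟩
  have hT : TS σ₁ S₁ = TS σ₂ S₂ := by
    apply Finset.Subset.antisymm
    · intro p hp; exact (step h p hp).1
    · intro p hp; exact (step h.symm p hp).1
  have hval : ∀ p ∈ TS σ₁ S₁, σ₂ p = σ₁ p := fun p hp => (step h p hp).2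
  have hexc : (univ.filter fun p => p < σ₁ p) = univ.filter fun p => p < σ₂ p := by
    ext p
    simp only [mem_filter, mem_univ, true_and]
    constructor
    · intro hp
      have hpT : p ∈ TS σ₁ S₁ := Finset.mem_union_left _ (by simp [hp])
      rw [hval p hpT]; exact hp
    · intro hp
      have hpT : p ∈ TS σ₂ S₂ := Finset.mem_union_left _ (by simp [hp])
      have := (step h.symm p hpT).2
      rw [this]; exact hp
  have hvalexc : ∀ p ∈ univ.filter fun p => p < σ₁ p, σ₁ p = σ₂ p := by
    intro p hp
    exact (hval p (Finset.mem_union_left _ hp)).symm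
  have hσeq : σ₁ = σ₂ := by
    have hd : dG σ₁⁻¹ = dG σ₂⁻¹ := by
      rw [dG_inv_eq, dG_inv_eq, ← hexc]
      apply Finset.image_congr
      intro p hp
      rw [Finset.mem_coe] at hp
      show (σ₁ p, p) = (σ₂ p, p)
      rw [hvalexc p hp]
    have := unique_of_dG (avoids_inv h₁) (avoids_inv h₂) hd
    have := congrArg (fun τ => τ⁻¹) this
    simpa using this
  refine ⟨hσeq, ?_⟩
  rw [S_eq_TS_filter hS₁, S_eq_TS_filter hS₂, hT, hσeq]

lemma ψ_surj {d : Finset (Fin (m+1) × Fin (m+1))} (hd : d ∈ Dset (m+1)) :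
    ∃ (σ' : Equiv.Perm (Fin m)) (S : Finset (Fin m)),
      Avoids321 σ' ∧ (∀ s ∈ S, σ' s = s) ∧ ψm σ' S = d := by
  rw [mem_Dset] at hd
  obtain ⟨hd1, hd2, hd3⟩ := hd
  set e : Finset (Fin m × Fin m) :=
    univ.filter (fun y : Fin m × Fin m => ((y.1.castSucc.rev, y.2.succ.rev) :
      Fin (m+1) × Fin (m+1)) ∈ d) with he
  have hmem_e : ∀ y : Fin m × Fin m, y ∈ e ↔
      ((y.1.castSucc.rev, y.2.succ.rev) : Fin (m+1) × Fin (m+1)) ∈ d := by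
    intro y; simp [he]
  have efun : ∀ x ∈ e, ∀ y ∈ e, x.1 = y.1 → x = y := by
    intro x hx y hy hxy
    rw [hmem_e] at hx hy
    have := hd3 _ hx _ hy (by simp only; rw [hxy])
    have h2 : x.2.succ.rev = y.2.succ.rev := congrArg Prod.snd this
    exact Prod.ext hxy (second_inj h2)
  have emono : ∀ x ∈ e, ∀ y ∈ e, x.1 < y.1 → x.2 < y.2 := by
    intro x hx y hy hxy
    rw [hmem_e] at hx hy
    have hx1 := x.1.isLt; have hy1 := y.1.isLt
    have hx2 := x.2.isLt; have hy2 := y.2.isLt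
    rw [Fin.lt_def] at hxy
    have h12 : ((y.1.castSucc.rev, y.2.succ.rev) : Fin (m+1) × Fin (m+1)).1 <
        ((x.1.castSucc.rev, x.2.succ.rev) : Fin (m+1) × Fin (m+1)).1 := by
      show (y.1.castSucc.rev : Fin (m+1)) < x.1.castSucc.rev
      rw [Fin.lt_def, val_i, val_i]
      omega
    have key : ((y.2.succ.rev : Fin (m+1)) : ℕ) < ((x.2.succ.rev : Fin (m+1)) : ℕ) :=
      hd2 _ hy _ hx h12
    rw [val_w, val_w] at key
    rw [Fin.lt_def]
    omega
  have ewex : ∀ x ∈ e, x.1 ≤ x.2 := by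
    intro x hx
    rw [hmem_e] at hx
    have key : ((x.2.succ.rev : Fin (m+1)) : ℕ) < ((x.1.castSucc.rev : Fin (m+1)) : ℕ) :=
      hd1 _ hx
    rw [val_i, val_w] at key
    have hx1 := x.1.isLt; have hx2 := x.2.isLt
    rw [Fin.le_def]
    omega
  set σ' := buildPerm e efun emono with hσ'
  refine ⟨σ', (pos e).filter (fun p => σ' p = p), buildPerm_avoids efun emono, ?_, ?_⟩
  · intro s hs
    exact (Finset.mem_filter.1 hs).2
  have hTS : TS σ' ((pos e).filter fun p => σ' p = p) = pos e := by
    apply Finset.Subset.antisymm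
    · intro p hp
      rcases Finset.mem_union.1 hp with h1 | h1
      · simp only [mem_filter, mem_univ, true_and] at h1
        by_contra hpp
        exact absurd h1 (not_lt.2 (build_nonwex efun emono ewex hpp))
      · exact Finset.mem_filter.1 h1 |>.1
    · intro p hp
      have := build_wex efun emono ewex hp
      rcases lt_or_eq_of_le this with h1 | h1
      · exact Finset.mem_union_left _ (by simp [h1]; exact h1)
      · exact Finset.mem_union_right _ (Finset.mem_filter.2 ⟨hp, h1.symm⟩)
  rw [ψm, hTS]
  ext x
  simp only [Finset.mem_image]
  constructor
  · rintro ⟨p, hp, rfl⟩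
    have hpair : (p, σ' p) ∈ e := buildFun_pair hp
    rw [hmem_e] at hpair
    exact hpair
  · intro hx
    have hc1 := hd1 _ hx
    rw [Fin.lt_def] at hc1
    have hx1 := x.1.isLt; have hx2 := x.2.isLt
    have hm : 1 ≤ m := by omega
    set p : Fin m := ⟨m - (x.1 : ℕ), by omega⟩ with hp
    set v : Fin m := ⟨m - 1 - (x.2 : ℕ), by omega⟩ with hv
    have hfp : (p.castSucc.rev : Fin (m+1)) = x.1 := by
      apply Fin.val_injective
      rw [val_i]
      simp only [hp]
      omega
    have hfv : (v.succ.rev : Fin (m+1)) = x.2 := by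
      apply Fin.val_injective
      rw [val_w]
      simp only [hv]
      omega
    have hpv : (p, v) ∈ e := by
      rw [hmem_e]
      simp only [hfp, hfv, Prod.mk.eta]
      exact hx
    have hppos : p ∈ pos e := mem_pos_iff.2 ⟨v, hpv⟩
    refine ⟨p, hppos, ?_⟩
    have : σ' p = v := buildFun_eq_of_mem efun hpv
    rw [this, hfp, hfv]


lemma expand_fix (q t : ℝ) (σ : Equiv.Perm (Fin m)) :
    (1 + q / t) ^ fixc σ
      = ∑ S ∈ (univ.filter fun i => σ i = i).powerset, (q / t) ^ S.card := by
  rw [show fixc σ = (univ.filter fun i : Fin m => σ i = i).card from rfl]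
  have h := Finset.prod_add (fun _ : Fin m => q / t) (fun _ : Fin m => (1 : ℝ))
    (univ.filter fun i => σ i = i)
  rw [Finset.prod_const] at h
  have h2 : ∀ S ∈ (univ.filter fun i : Fin m => σ i = i).powerset,
      (∏ _i ∈ S, (q / t)) * ∏ _i ∈ (univ.filter fun i : Fin m => σ i = i) \ S, (1 : ℝ)
        = (q / t) ^ S.card := by
    intro S _
    rw [Finset.prod_const, Finset.prod_const, one_pow, mul_one]
  rw [Finset.sum_congr rfl h2] at h
  rw [← h, add_comm]

lemma rhs_eq (q t : ℝ) (ht : t ≠ 0) :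
    t ^ (m + 1) * ∑ σ ∈ Finset.univ.filter (fun σ : Equiv.Perm (Fin m) => Avoids321 σ),
        (q / t) ^ exc σ * q ^ inv σ * (1 + q / t) ^ fixc σ =
      ∑ d ∈ Dset (m+1), t ^ (m + 1 - d.card) * q ^ (∑ x ∈ d, ((x.1 : ℕ) - (x.2 : ℕ))) := by
  have step1 : t ^ (m + 1) * ∑ σ ∈ Finset.univ.filter
        (fun σ : Equiv.Perm (Fin m) => Avoids321 σ),
        (q / t) ^ exc σ * q ^ inv σ * (1 + q / t) ^ fixc σ
      = ∑ σ ∈ Finset.univ.filter (fun σ : Equiv.Perm (Fin m) => Avoids321 σ),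
          ∑ S ∈ (univ.filter fun i => σ i = i).powerset,
            t ^ (m + 1) * ((q / t) ^ exc σ * q ^ inv σ * (q / t) ^ S.card) := by
    rw [Finset.mul_sum]
    apply Finset.sum_congr rfl
    intro σ _
    rw [expand_fix q t σ, Finset.mul_sum, Finset.mul_sum]
  rw [step1, Finset.sum_sigma']
  apply Finset.sum_nbij (fun a => ψm a.1 a.2)
  · intro a ha
    rw [Finset.mem_sigma] at ha
    have h1 : Avoids321 a.1 := by
      have := ha.1; simp only [mem_filter, mem_univ, true_and] at this; exact this
    have h2 : ∀ s ∈ a.2, a.1 s = s := by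
      intro s hs
      have := Finset.mem_powerset.1 ha.2 hs
      simp only [mem_filter, mem_univ, true_and] at this; exact this
    exact ψ_mem_Dset h1 h2
  · intro a ha b hb h
    simp only [Finset.mem_coe, Finset.mem_sigma] at ha hb
    have ha1 : Avoids321 a.1 := by
      have := ha.1; simp only [mem_filter, mem_univ, true_and] at this; exact this
    have ha2 : ∀ s ∈ a.2, a.1 s = s := by
      intro s hs
      have := Finset.mem_powerset.1 ha.2 hs
      simp only [mem_filter, mem_univ, true_and] at this; exact this
    have hb1 : Avoids321 b.1 := by
      have := hb.1; simp only [mem_filter, mem_univ, true_and] at this; exact this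
    have hb2 : ∀ s ∈ b.2, b.1 s = s := by
      intro s hs
      have := Finset.mem_powerset.1 hb.2 hs
      simp only [mem_filter, mem_univ, true_and] at this; exact this
    obtain ⟨hσ, hSeq⟩ := ψ_inj ha1 ha2 hb1 hb2 h
    exact Sigma.ext hσ (heq_of_eq hSeq)
  · intro d hd
    rw [Finset.mem_coe] at hd
    obtain ⟨σ', S, hσ, hS, hψ⟩ := ψ_surj hd
    refine ⟨⟨σ', S⟩, ?_, hψ⟩
    rw [Finset.mem_coe, Finset.mem_sigma]
    constructor
    · simp only [mem_filter, mem_univ, true_and]; exact hσ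
    · rw [Finset.mem_powerset]
      intro s hs
      simp only [mem_filter, mem_univ, true_and]
      exact hS s hs
  · rintro ⟨σ, S⟩ ha
    rw [Finset.mem_sigma] at ha
    have h1 : Avoids321 σ := by
      have := ha.1; simp only [mem_filter, mem_univ, true_and] at this; exact this
    have h2 : ∀ s ∈ S, σ s = s := by
      intro s hs
      have := Finset.mem_powerset.1 ha.2 hs
      simp only [mem_filter, mem_univ, true_and] at this; exact this
    simp only
    rw [card_ψ h2, sum_ψ h1 h2]
    have hle : exc σ + S.card ≤ m := by
      have hc := card_TS h2
      have := Finset.card_le_univ (TS σ S)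
      rw [Fintype.card_fin] at this
      omega
    rw [pow_sub₀ t ht (by omega : exc σ + S.card ≤ m + 1)]
    rw [div_pow, div_pow, pow_add, pow_add]
    field_simp
    ring


theorem stmt12 (n : ℕ) (hn : 1 ≤ n) (q t : ℝ) (ht : t ≠ 0) :
    ∑ σ ∈ Finset.univ.filter (fun σ : Equiv.Perm (Fin n) => Avoids321 σ),
        t ^ (exc σ + fixc σ) * q ^ inv σ =
      t ^ n *
        ∑ σ ∈ Finset.univ.filter (fun σ : Equiv.Perm (Fin (n - 1)) => Avoids321 σ),
          (q / t) ^ exc σ * q ^ inv σ * (1 + q / t) ^ fixc σ := by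
  obtain ⟨m, rfl⟩ : ∃ m, n = m + 1 := ⟨n - 1, by omega⟩
  rw [lhs_eq q t]
  exact (rhs_eq q t ht).symm

end EulerExc
end
end

section
/- For every integer n ≥ 0 and all real numbers y and t, one has Σ_{σ∈B_n} y^{neg σ} t^{des_B σ} = Σ_{σ∈B_n} y^{neg σ} t^{exc_B σ}; that is, the pair of statistics (neg, des_B) on the hyperoctahedral group B_n is jointly equidistributed with (neg, exc_B). -/
open Finset

open scoped Classical

noncomputable section

namespace EulerExc

variable {n : ℕ}

section AuxEquid

def extLast (σ : Equiv.Perm (Fin n)) : Equiv.Perm (Fin (n + 1)) where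
  toFun := Fin.lastCases (Fin.last n) (fun i => (σ i).castSucc)
  invFun := Fin.lastCases (Fin.last n) (fun i => (σ⁻¹ i).castSucc)
  left_inv x := by
    cases x using Fin.lastCases with
    | last => simp
    | cast i => simp
  right_inv x := by
    cases x using Fin.lastCases with
    | last => simp
    | cast i => simp

@[simp] lemma extLast_last (σ : Equiv.Perm (Fin n)) : extLast σ (Fin.last n) = Fin.last n := by
  simp [extLast]

@[simp] lemma extLast_castSucc (σ : Equiv.Perm (Fin n)) (i : Fin n) :
    extLast σ (Fin.castSucc i) = (σ i).castSucc := by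
  simp [extLast]

lemma extLast_injective : Function.Injective (extLast (n := n)) := by
  intro σ τ h
  ext i
  have := congrArg (fun π : Equiv.Perm (Fin (n+1)) => π (Fin.castSucc i)) h
  simpa [Fin.castSucc_inj, Fin.val_inj] using this

/-- insertion of the largest value at position `p` -/
def insPerm (σ : Equiv.Perm (Fin n)) (p : Fin (n + 1)) : Equiv.Perm (Fin (n + 1)) :=
  extLast σ * (Fin.cycleRange (Fin.last n))⁻¹ * Fin.cycleRange p

@[simp] lemma insPerm_self (σ : Equiv.Perm (Fin n)) (p : Fin (n + 1)) :
    insPerm σ p p = Fin.last n := by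
  rw [insPerm, Equiv.Perm.mul_apply, Equiv.Perm.mul_apply, Fin.cycleRange_self,
    Equiv.Perm.inv_def, Fin.cycleRange_symm_zero, extLast_last]

@[simp] lemma insPerm_succAbove (σ : Equiv.Perm (Fin n)) (p : Fin (n + 1)) (j : Fin n) :
    insPerm σ p (p.succAbove j) = Fin.castSucc (σ j) := by
  rw [insPerm, Equiv.Perm.mul_apply, Equiv.Perm.mul_apply, Fin.cycleRange_succAbove,
    Equiv.Perm.inv_def, Fin.cycleRange_symm_succ, Fin.succAbove_last, extLast_castSucc]

def extSign (ε : Fin n → Bool) (b : Bool) : Fin (n + 1) → Bool :=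
  Fin.lastCases b ε

@[simp] lemma extSign_last (ε : Fin n → Bool) (b : Bool) : extSign ε b (Fin.last n) = b := by
  simp [extSign]

@[simp] lemma extSign_castSucc (ε : Fin n → Bool) (b : Bool) (i : Fin n) :
    extSign ε b (Fin.castSucc i) = ε i := by
  simp [extSign]

def insSign (ε : Fin n → Bool) (b : Bool) (p : Fin (n + 1)) : Fin (n + 1) → Bool :=
  fun x => Fin.cases b ε (p.cycleRange x)

@[simp] lemma insSign_self (ε : Fin n → Bool) (b : Bool) (p : Fin (n + 1)) :
    insSign ε b p p = b := by
  simp [insSign, Fin.cycleRange_self]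

@[simp] lemma insSign_succAbove (ε : Fin n → Bool) (b : Bool) (p : Fin (n + 1)) (j : Fin n) :
    insSign ε b p (p.succAbove j) = ε j := by
  simp [insSign, Fin.cycleRange_succAbove]

lemma negB_extSign (ε : Fin n → Bool) (b : Bool) :
    negB (extSign ε b) = negB ε + (if b then 1 else 0) := by
  simp only [negB, Finset.card_filter]
  rw [Fin.sum_univ_castSucc]
  simp

lemma negB_insSign (ε : Fin n → Bool) (b : Bool) (p : Fin (n + 1)) :
    negB (insSign ε b p) = negB ε + (if b then 1 else 0) := by
  rw [negB, negB, Finset.card_filter, Finset.card_filter]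
  show (∑ x : Fin (n + 1), if (Fin.cases b ε (p.cycleRange x) : Bool) = true then 1 else 0) = _
  rw [← Equiv.sum_comp p.cycleRange.symm
    (fun x => if (Fin.cases b ε (p.cycleRange x) : Bool) = true then 1 else 0)]
  simp only [Equiv.apply_symm_apply]
  rw [Fin.sum_univ_succ]
  simp [add_comm]
  rw [Finset.card_filter]
  congr

lemma excB_extLast (σ : Equiv.Perm (Fin n)) (ε : Fin n → Bool) (b : Bool) :
    excB (extLast σ) (extSign ε b) = excB σ ε + (if b then 1 else 0) := by
  simp only [excB, Finset.card_filter]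
  rw [Fin.sum_univ_castSucc]
  have h1 : ∀ i : Fin n,
      (if (Fin.castSucc i < extLast σ (Fin.castSucc i) ∨
          (extLast σ (Fin.castSucc i) = Fin.castSucc i ∧ extSign ε b (Fin.castSucc i) = true))
        then (1:ℕ) else 0)
      = if (i < σ i ∨ (σ i = i ∧ ε i = true)) then 1 else 0 := by
    intro i
    simp [Fin.castSucc_lt_castSucc_iff, Fin.castSucc_inj]
  simp only [h1]
  congr 1
  simp [Fin.lt_iff_val_lt_val]

lemma excB_swap (σ : Equiv.Perm (Fin n)) (ε : Fin n → Bool) (b : Bool) (c₀ : Fin n) :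
    excB (extLast σ * Equiv.swap (Fin.castSucc c₀) (Fin.last n)) (extSign ε b) =
      if (c₀ < σ c₀ ∨ (σ c₀ = c₀ ∧ ε c₀ = true)) then excB σ ε else excB σ ε + 1 := by
  set τ := extLast σ * Equiv.swap (Fin.castSucc c₀) (Fin.last n) with hτ
  have hτc : ∀ i : Fin n, i ≠ c₀ → τ (Fin.castSucc i) = Fin.castSucc (σ i) := by
    intro i hi
    rw [hτ, Equiv.Perm.mul_apply, Equiv.swap_apply_of_ne_of_ne
      (by simpa [Fin.castSucc_inj] using hi) (Fin.castSucc_lt_last i).ne, extLast_castSucc]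
  have hτ0 : τ (Fin.castSucc c₀) = Fin.last n := by
    rw [hτ, Equiv.Perm.mul_apply, Equiv.swap_apply_left, extLast_last]
  have hτl : τ (Fin.last n) = Fin.castSucc (σ c₀) := by
    rw [hτ, Equiv.Perm.mul_apply, Equiv.swap_apply_right, extLast_castSucc]
  simp only [excB, Finset.card_filter]
  rw [Fin.sum_univ_castSucc]
  have hlast : (if (Fin.last n < τ (Fin.last n) ∨
      (τ (Fin.last n) = Fin.last n ∧ extSign ε b (Fin.last n) = true)) then (1:ℕ) else 0) = 0 := by
    rw [hτl]
    simp [lt_asymm (Fin.castSucc_lt_last (σ c₀)), ne_of_lt (Fin.castSucc_lt_last (σ c₀))]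
  rw [hlast, add_zero]
  have h1 : ∀ i : Fin n,
      (if (Fin.castSucc i < τ (Fin.castSucc i) ∨
          (τ (Fin.castSucc i) = Fin.castSucc i ∧ extSign ε b (Fin.castSucc i) = true))
        then (1:ℕ) else 0)
      = if i = c₀ then 1 else (if (i < σ i ∨ (σ i = i ∧ ε i = true)) then 1 else 0) := by
    intro i
    by_cases hi : i = c₀
    · subst hi
      rw [hτ0]
      simp [Fin.castSucc_lt_last]
    · rw [hτc i hi]
      simp [hi, Fin.castSucc_lt_castSucc_iff, Fin.castSucc_inj]
  simp only [h1]
  rw [← Finset.sum_erase_add _ _ (Finset.mem_univ c₀), if_pos rfl]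
  have h2 : ∑ i ∈ Finset.univ.erase c₀,
      (if i = c₀ then (1:ℕ) else (if (i < σ i ∨ (σ i = i ∧ ε i = true)) then 1 else 0))
      = ∑ i ∈ Finset.univ.erase c₀, (if (i < σ i ∨ (σ i = i ∧ ε i = true)) then (1:ℕ) else 0) := by
    refine Finset.sum_congr rfl ?_
    intro i hi
    rw [if_neg (Finset.mem_erase.mp hi).1]
  rw [h2]
  have h3 : ∑ i : Fin n, (if (i < σ i ∨ (σ i = i ∧ ε i = true)) then (1:ℕ) else 0)
      = ∑ i ∈ Finset.univ.erase c₀, (if (i < σ i ∨ (σ i = i ∧ ε i = true)) then (1:ℕ) else 0)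
        + (if (c₀ < σ c₀ ∨ (σ c₀ = c₀ ∧ ε c₀ = true)) then 1 else 0) := by
    rw [Finset.sum_erase_add _ _ (Finset.mem_univ c₀)]
  by_cases hc : (c₀ < σ c₀ ∨ (σ c₀ = c₀ ∧ ε c₀ = true)) <;> simp [hc] at h3 ⊢ <;> omega

lemma signedVal_bounds (σ : Equiv.Perm (Fin n)) (ε : Fin n → Bool) (k : ℕ) :
    -(n:ℤ) ≤ signedVal σ ε k ∧ signedVal σ ε k ≤ (n:ℤ) := by
  rw [signedVal]
  split
  · rename_i h
    have hlt : ((σ ⟨k - 1, by omega⟩ : Fin n) : ℕ) < n := (σ _).isLt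
    split <;> constructor <;> push_cast <;> omega
  · simp

lemma signedVal_insPerm (σ : Equiv.Perm (Fin n)) (ε : Fin n → Bool) (b : Bool) (p : Fin (n + 1))
    (k : ℕ) :
    signedVal (insPerm σ p) (insSign ε b p) k =
      if k = (p : ℕ) + 1 then (if b then -((n:ℤ)+1) else ((n:ℤ)+1))
      else if k ≤ (p : ℕ) then signedVal σ ε k else signedVal σ ε (k - 1) := by
  by_cases h : 1 ≤ k ∧ k ≤ n + 1
  · -- main case
    have hk1 : k - 1 < n + 1 := by omega
    set x : Fin (n + 1) := ⟨k - 1, hk1⟩ with hx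
    by_cases hxp : x = p
    · -- inserted position
      have hkp : k = (p : ℕ) + 1 := by
        have := congrArg Fin.val hxp
        simp [hx] at this
        omega
      rw [signedVal, dif_pos h, if_pos hkp]
      have h1 : insPerm σ p ⟨k - 1, by omega⟩ = Fin.last n := by
        rw [show (⟨k - 1, by omega⟩ : Fin (n+1)) = x from rfl, hxp, insPerm_self]
      have h2 : insSign ε b p ⟨k - 1, by omega⟩ = b := by
        rw [show (⟨k - 1, by omega⟩ : Fin (n+1)) = x from rfl, hxp, insSign_self]
      rw [h1, h2]
      cases b <;> simp [Fin.val_last]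
    · obtain ⟨j, hj⟩ := Fin.exists_succAbove_eq hxp
      have h1 : insPerm σ p ⟨k - 1, by omega⟩ = Fin.castSucc (σ j) := by
        rw [show (⟨k - 1, by omega⟩ : Fin (n+1)) = x from rfl, ← hj, insPerm_succAbove]
      have h2 : insSign ε b p ⟨k - 1, by omega⟩ = ε j := by
        rw [show (⟨k - 1, by omega⟩ : Fin (n+1)) = x from rfl, ← hj, insSign_succAbove]
      have hkp : k ≠ (p : ℕ) + 1 := by
        intro hk
        apply hxp
        apply Fin.ext
        simp [hx]
        omega
      rw [signedVal, dif_pos h, if_neg hkp, h1, h2]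
      -- two cases for succAbove
      rcases lt_or_ge (Fin.castSucc j) p with hlt | hle
      · have hval : ((p.succAbove j : Fin (n+1)) : ℕ) = (j : ℕ) := by
          rw [Fin.succAbove_of_castSucc_lt _ _ hlt]
          simp
        have hjk : (j : ℕ) = k - 1 := by
          rw [← hval, hj]
        have hklep : k ≤ (p : ℕ) := by
          have := hlt
          rw [Fin.lt_iff_val_lt_val] at this
          simp at this
          omega
        rw [if_pos hklep, signedVal, dif_pos (by constructor <;> omega : 1 ≤ k ∧ k ≤ n)]
        have hidx : (⟨k - 1, by omega⟩ : Fin n) = j := by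
          apply Fin.ext; simp [hjk]
        rw [hidx]
        simp
      · have hval : ((p.succAbove j : Fin (n+1)) : ℕ) = (j : ℕ) + 1 := by
          rw [Fin.succAbove_of_le_castSucc _ _ hle]
          simp
        have hjk : (j : ℕ) + 1 = k - 1 := by
          rw [← hval, hj]
        have hple : ¬ (k ≤ (p : ℕ)) := by
          rw [Fin.le_iff_val_le_val] at hle
          simp at hle
          omega
        rw [if_neg hple, signedVal, dif_pos (by
          constructor
          · omega
          · have := j.isLt; omega : 1 ≤ k - 1 ∧ k - 1 ≤ n)]
        have hidx : (⟨k - 1 - 1, by omega⟩ : Fin n) = j := by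
          apply Fin.ext; simp; omega
        rw [hidx]
        simp
  · -- out of range
    rw [signedVal, dif_neg h]
    have hkp : k ≠ (p : ℕ) + 1 := by
      have := p.isLt; omega
    rw [if_neg hkp]
    rcases Nat.lt_or_ge k 1 with hk | hk
    · have : k = 0 := by omega
      subst this
      rw [if_pos (by omega), signedVal, dif_neg (by omega)]
    · have hkn : ¬ (k ≤ (p : ℕ)) := by
        have := p.isLt; omega
      rw [if_neg hkn, signedVal, dif_neg (by omega)]

lemma sum_ins (g : ℕ → ℕ) (A B : ℕ) (P m : ℕ) (hP : P ≤ m) :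
    (∑ i ∈ range (m + 1),
        (if i < P then g i else if i = P then A else if i = P + 1 then B else g (i - 1)))
      = (∑ i ∈ (range m).erase P, g i) + A + (if P = m then 0 else B) := by
  induction m with
  | zero =>
    have : P = 0 := by omega
    subst this
    simp
  | succ m ih =>
    rw [Finset.sum_range_succ]
    rcases Nat.lt_or_ge P (m + 1) with hPm | hPm
    · -- P ≤ m, use ih
      have hP' : P ≤ m := by omega
      rw [ih hP']
      have hlt : ¬ (m + 1 < P) := by omega
      have hne : ¬ (m + 1 = P) := by omega
      rw [if_neg hlt, if_neg hne]
      rcases Nat.lt_or_ge P m with hPm2 | hPm2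
      · -- P < m : term is g m
        have : ¬ (m + 1 = P + 1) := by omega
        rw [if_neg this]
        rw [if_neg (by omega : ¬ P = m), if_neg (by omega : ¬ P = m + 1)]
        have herase : (range (m+1)).erase P = insert m ((range m).erase P) := by
          rw [Finset.range_add_one, Finset.erase_insert_of_ne (by omega : m ≠ P)]
        rw [herase, Finset.sum_insert (by simp)]
        simp; omega
      · -- P = m : term is B
        have hPm3 : P = m := by omega
        subst hPm3
        rw [if_pos rfl, if_pos rfl, if_neg (by omega : ¬ P = P + 1)]
        have herase : (range (P+1)).erase P = range P := by
          rw [Finset.range_add_one, Finset.erase_insert (by simp)]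
        rw [herase]
        have herase2 : (range P).erase P = range P := by
          apply Finset.erase_eq_of_notMem; simp
        rw [herase2]
        omega
    · -- P = m + 1 : inserted at the very end
      have hPm3 : P = m + 1 := by omega
      subst hPm3
      rw [if_neg (by omega), if_pos rfl, if_pos rfl]
      have herase : (range (m+1)).erase (m+1) = range (m+1) := by
        apply Finset.erase_eq_of_notMem; simp
      rw [herase]
      have : ∀ i ∈ range (m + 1),
          (if i < m + 1 then g i else if i = m + 1 then A else if i = m + 2 then B else g (i-1))
          = g i := by
        intro i hi
        rw [if_pos (Finset.mem_range.mp hi)]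
      rw [Finset.sum_congr rfl this]
      rfl

lemma desB_insPerm (σ : Equiv.Perm (Fin n)) (ε : Fin n → Bool) (b : Bool) (p : Fin (n + 1)) :
    desB (insPerm σ p) (insSign ε b p) =
      (∑ i ∈ (range n).erase (p : ℕ),
        (if signedVal σ ε (i + 1) < signedVal σ ε i then 1 else 0))
      + (if (if b then -((n:ℤ)+1) else ((n:ℤ)+1)) < signedVal σ ε (p : ℕ) then 1 else 0)
      + (if (p : ℕ) = n then 0
          else if signedVal σ ε ((p : ℕ) + 1) < (if b then -((n:ℤ)+1) else ((n:ℤ)+1))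
            then 1 else 0) := by
  set P := (p : ℕ) with hP
  set L : ℤ := (if b then -((n:ℤ)+1) else ((n:ℤ)+1)) with hL
  have hPn : P ≤ n := by have := p.isLt; omega
  rw [desB, Finset.card_filter]
  have key : ∀ i ∈ range (n + 1),
      (if signedVal (insPerm σ p) (insSign ε b p) (i + 1) <
          signedVal (insPerm σ p) (insSign ε b p) i then (1:ℕ) else 0)
      = (if i < P then (if signedVal σ ε (i + 1) < signedVal σ ε i then 1 else 0)
         else if i = P then (if L < signedVal σ ε P then 1 else 0)
         else if i = P + 1 then (if signedVal σ ε (P + 1) < L then 1 else 0)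
         else (if signedVal σ ε ((i - 1) + 1) < signedVal σ ε (i - 1) then 1 else 0)) := by
    intro i _
    rw [signedVal_insPerm, signedVal_insPerm, ← hP, ← hL]
    by_cases h1 : i < P
    · rw [if_pos h1, if_neg (by omega : ¬ i + 1 = P + 1), if_pos (by omega : i + 1 ≤ P),
        if_neg (by omega : ¬ i = P + 1), if_pos (by omega : i ≤ P)]
    · by_cases h2 : i = P
      · rw [if_neg h1, if_pos h2, if_pos (by omega : i + 1 = P + 1),
          if_neg (by omega : ¬ i = P + 1), if_pos (by omega : i ≤ P), h2]
      · by_cases h3 : i = P + 1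
        · subst h3
          rw [if_neg h1, if_neg h2, if_pos rfl,
            if_neg (by omega : ¬ P + 1 + 1 = P + 1), if_neg (by omega : ¬ P + 1 + 1 ≤ P),
            if_pos rfl]
          have : P + 1 + 1 - 1 = P + 1 := by omega
          rw [this]
        · rw [if_neg h1, if_neg h2, if_neg h3,
            if_neg (by omega : ¬ i + 1 = P + 1), if_neg (by omega : ¬ i + 1 ≤ P),
            if_neg h3, if_neg (by omega : ¬ i ≤ P)]
          have : i + 1 - 1 = (i - 1) + 1 := by omega
          rw [this]
  rw [Finset.sum_congr rfl key, sum_ins _ _ _ _ _ hPn]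

lemma desB_insPerm_last (σ : Equiv.Perm (Fin n)) (ε : Fin n → Bool) (b : Bool) :
    desB (insPerm σ (Fin.last n)) (insSign ε b (Fin.last n)) =
      desB σ ε + (if b then 1 else 0) := by
  rw [desB_insPerm]
  simp only [Fin.val_last]
  rw [if_pos (trivial : True)]
  have herase : (range n).erase n = range n := by
    apply Finset.erase_eq_of_notMem; simp
  have hd : ∑ i ∈ range n, (if signedVal σ ε (i + 1) < signedVal σ ε i then 1 else 0)
      = desB σ ε := by
    rw [desB, Finset.card_filter]
  obtain ⟨hb1, hb2⟩ := signedVal_bounds σ ε n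
  push_cast at hb1 hb2
  have hA : (if (if b then -((n:ℤ)+1) else ((n:ℤ)+1)) < signedVal σ ε n then (1:ℕ) else 0)
      = (if b then 1 else 0) := by
    cases b <;> simp <;> omega
  rw [herase, hd, hA, add_zero]

lemma desB_insPerm_castSucc (σ : Equiv.Perm (Fin n)) (ε : Fin n → Bool) (b : Bool) (p₀ : Fin n) :
    desB (insPerm σ (Fin.castSucc p₀)) (insSign ε b (Fin.castSucc p₀)) =
      if signedVal σ ε ((p₀ : ℕ) + 1) < signedVal σ ε (p₀ : ℕ) then desB σ ε
      else desB σ ε + 1 := by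
  rw [desB_insPerm]
  simp only [Fin.coe_castSucc]
  have hp0 : (p₀ : ℕ) < n := p₀.isLt
  rw [if_neg (by omega : ¬ (p₀ : ℕ) = n)]
  have hd : desB σ ε = ∑ i ∈ (range n).erase (p₀ : ℕ),
      ((if signedVal σ ε (i + 1) < signedVal σ ε i then 1 else 0))
      + (if signedVal σ ε ((p₀:ℕ) + 1) < signedVal σ ε (p₀:ℕ) then 1 else 0) := by
    rw [desB, Finset.card_filter,
      ← Finset.sum_erase_add _ _ (Finset.mem_range.mpr hp0)]
  obtain ⟨ha1, ha2⟩ := signedVal_bounds σ ε (p₀ : ℕ)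
  obtain ⟨hc1, hc2⟩ := signedVal_bounds σ ε ((p₀ : ℕ) + 1)
  push_cast at ha1 ha2 hc1 hc2
  have hA : (if (if b then -((n:ℤ)+1) else ((n:ℤ)+1)) < signedVal σ ε (p₀:ℕ) then (1:ℕ) else 0)
      = (if b then 1 else 0) := by
    cases b <;> simp <;> omega
  have hB : (if signedVal σ ε ((p₀:ℕ)+1) < (if b then -((n:ℤ)+1) else ((n:ℤ)+1))
      then (1:ℕ) else 0) = (if b then 0 else 1) := by
    cases b <;> simp <;> omega
  rw [hA, hB]
  by_cases hdsc : signedVal σ ε ((p₀:ℕ) + 1) < signedVal σ ε (p₀:ℕ)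
  · rw [if_pos hdsc] at hd
    rw [if_pos hdsc]
    cases b
    · rw [if_neg Bool.false_ne_true, if_neg Bool.false_ne_true]; omega
    · rw [if_pos rfl, if_pos rfl]; omega
  · rw [if_neg hdsc] at hd
    rw [if_neg hdsc]
    cases b
    · rw [if_neg Bool.false_ne_true, if_neg Bool.false_ne_true]; omega
    · rw [if_pos rfl, if_pos rfl]; omega

/-- the common recursion kernel -/
def Hfun (f : ℕ → ℕ → ℝ) (n s d : ℕ) : ℝ :=
  f s d + f (s+1) (d+1) + d • (f s d + f (s+1) d) + (n - d) • (f s (d+1) + f (s+1) (d+1))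

lemma exc_inner (f : ℕ → ℕ → ℝ) (σ : Equiv.Perm (Fin n)) (ε : Fin n → Bool) :
    ∑ cb : Fin (n+1) × Bool,
      f (negB (extSign ε cb.2)) (excB (extLast σ * Equiv.swap cb.1 (Fin.last n)) (extSign ε cb.2))
    = Hfun f n (negB ε) (excB σ ε) := by
  have hcard : (univ.filter fun i : Fin n => i < σ i ∨ (σ i = i ∧ ε i = true)).card
      = excB σ ε := rfl
  have hcard' : (univ.filter fun i : Fin n =>
      ¬ (i < σ i ∨ (σ i = i ∧ ε i = true))).card = n - excB σ ε := by
    have h2 := Finset.card_filter_add_card_filter_not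
      (s := (univ : Finset (Fin n))) (p := fun i : Fin n => i < σ i ∨ (σ i = i ∧ ε i = true))
    simp only [Finset.card_univ, Fintype.card_fin] at h2
    omega
  have key : ∀ b : Bool, ∑ c : Fin (n+1),
      f (negB (extSign ε b)) (excB (extLast σ * Equiv.swap c (Fin.last n)) (extSign ε b))
      = f (negB ε + (if b then 1 else 0)) (excB σ ε + (if b then 1 else 0))
        + excB σ ε • f (negB ε + (if b then 1 else 0)) (excB σ ε)
        + (n - excB σ ε) • f (negB ε + (if b then 1 else 0)) (excB σ ε + 1) := by
    intro b
    rw [Fin.sum_univ_castSucc]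
    have hlast : excB (extLast σ * Equiv.swap (Fin.last n) (Fin.last n)) (extSign ε b)
        = excB σ ε + (if b then 1 else 0) := by
      rw [Equiv.swap_self]
      have : extLast σ * (Equiv.refl (Fin (n+1))) = extLast σ := by
        ext x; simp
      rw [this, excB_extLast]
    rw [hlast]
    have hterm : ∀ c₀ : Fin n,
        f (negB (extSign ε b)) (excB (extLast σ * Equiv.swap (Fin.castSucc c₀) (Fin.last n))
          (extSign ε b))
        = if (c₀ < σ c₀ ∨ (σ c₀ = c₀ ∧ ε c₀ = true))
            then f (negB ε + (if b then 1 else 0)) (excB σ ε)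
            else f (negB ε + (if b then 1 else 0)) (excB σ ε + 1) := by
      intro c₀
      rw [excB_swap, negB_extSign, apply_ite (f (negB ε + (if b then 1 else 0)))]
    rw [Finset.sum_congr rfl (fun c₀ _ => hterm c₀), Finset.sum_ite, Finset.sum_const,
      Finset.sum_const, hcard, hcard', negB_extSign]
    abel
  rw [Fintype.sum_prod_type_right, Fintype.sum_bool, key true, key false]
  simp only [if_true, if_false, Bool.false_eq_true, add_zero]
  rw [Hfun]
  simp only [nsmul_eq_mul]
  ring

lemma des_inner (f : ℕ → ℕ → ℝ) (σ : Equiv.Perm (Fin n)) (ε : Fin n → Bool) :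
    ∑ pb : Fin (n+1) × Bool,
      f (negB (insSign ε pb.2 pb.1)) (desB (insPerm σ pb.1) (insSign ε pb.2 pb.1))
    = Hfun f n (negB ε) (desB σ ε) := by
  have hcard : (univ.filter fun p₀ : Fin n =>
      signedVal σ ε ((p₀:ℕ) + 1) < signedVal σ ε (p₀:ℕ)).card = desB σ ε := by
    rw [desB, Finset.card_filter, Finset.card_filter,
      ← Fin.sum_univ_eq_sum_range (fun i => if signedVal σ ε (i + 1) < signedVal σ ε i
        then (1:ℕ) else 0)]
  have hcard' : (univ.filter fun p₀ : Fin n =>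
      ¬ (signedVal σ ε ((p₀:ℕ) + 1) < signedVal σ ε (p₀:ℕ))).card = n - desB σ ε := by
    have h2 := Finset.card_filter_add_card_filter_not
      (s := (univ : Finset (Fin n)))
      (p := fun p₀ : Fin n => signedVal σ ε ((p₀:ℕ) + 1) < signedVal σ ε (p₀:ℕ))
    simp only [Finset.card_univ, Fintype.card_fin] at h2
    omega
  have key : ∀ b : Bool, ∑ p : Fin (n+1),
      f (negB (insSign ε b p)) (desB (insPerm σ p) (insSign ε b p))
      = f (negB ε + (if b then 1 else 0)) (desB σ ε + (if b then 1 else 0))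
        + desB σ ε • f (negB ε + (if b then 1 else 0)) (desB σ ε)
        + (n - desB σ ε) • f (negB ε + (if b then 1 else 0)) (desB σ ε + 1) := by
    intro b
    rw [Fin.sum_univ_castSucc]
    rw [desB_insPerm_last, negB_insSign]
    have hterm : ∀ p₀ : Fin n,
        f (negB (insSign ε b (Fin.castSucc p₀)))
          (desB (insPerm σ (Fin.castSucc p₀)) (insSign ε b (Fin.castSucc p₀)))
        = if (signedVal σ ε ((p₀:ℕ) + 1) < signedVal σ ε (p₀:ℕ))
            then f (negB ε + (if b then 1 else 0)) (desB σ ε)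
            else f (negB ε + (if b then 1 else 0)) (desB σ ε + 1) := by
      intro p₀
      rw [desB_insPerm_castSucc, negB_insSign, apply_ite (f (negB ε + (if b then 1 else 0)))]
    rw [Finset.sum_congr rfl (fun p₀ _ => hterm p₀), Finset.sum_ite, Finset.sum_const,
      Finset.sum_const, hcard, hcard']
    abel
  rw [Fintype.sum_prod_type_right, Fintype.sum_bool, key true, key false]
  simp only [if_true, if_false, Bool.false_eq_true, add_zero]
  rw [Hfun]
  simp only [nsmul_eq_mul]
  ring

abbrev Bsmall (n : ℕ) := (Equiv.Perm (Fin n) × (Fin n → Bool)) × (Fin (n+1) × Bool)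
abbrev Bbig (n : ℕ) := Equiv.Perm (Fin (n+1)) × (Fin (n+1) → Bool)

lemma card_eq : Fintype.card (Bsmall n) = Fintype.card (Bbig n) := by
  simp only [Fintype.card_prod, Fintype.card_perm, Fintype.card_fun, Fintype.card_fin,
    Fintype.card_bool, Nat.factorial_succ, pow_succ]
  ring

def PhiExc (x : Bsmall n) : Bbig n :=
  (extLast x.1.1 * Equiv.swap x.2.1 (Fin.last n), extSign x.1.2 x.2.2)

def PhiDes (x : Bsmall n) : Bbig n :=
  (insPerm x.1.1 x.2.1, insSign x.1.2 x.2.2 x.2.1)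

lemma phiExc_bijective : Function.Bijective (PhiExc (n := n)) := by
  rw [Fintype.bijective_iff_injective_and_card]
  refine ⟨?_, card_eq⟩
  rintro ⟨⟨σ₁, ε₁⟩, ⟨c₁, b₁⟩⟩ ⟨⟨σ₂, ε₂⟩, ⟨c₂, b₂⟩⟩ h
  rw [PhiExc, PhiExc, Prod.mk.injEq] at h
  obtain ⟨hperm, hsign⟩ := h
  have hb : b₁ = b₂ := by
    have := congrFun hsign (Fin.last n)
    simpa using this
  have hε : ε₁ = ε₂ := by
    funext i
    have := congrFun hsign (Fin.castSucc i)
    simpa using this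
  have hinvlast : ∀ (σ : Equiv.Perm (Fin n)) (c : Fin (n+1)),
      (extLast σ * Equiv.swap c (Fin.last n))⁻¹ (Fin.last n) = c := by
    intro σ c
    rw [mul_inv_rev, Equiv.Perm.mul_apply]
    have h1 : (extLast σ)⁻¹ (Fin.last n) = Fin.last n := by
      rw [Equiv.Perm.inv_def, Equiv.symm_apply_eq, extLast_last]
    rw [h1]
    have h2 : (Equiv.swap c (Fin.last n))⁻¹ = Equiv.swap c (Fin.last n) := by
      rw [Equiv.Perm.inv_def, Equiv.symm_swap]
    rw [h2, Equiv.swap_apply_right]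
  have hc : c₁ = c₂ := by
    rw [← hinvlast σ₁ c₁, ← hinvlast σ₂ c₂, hperm]
  have hσ : σ₁ = σ₂ := by
    have hext : extLast σ₁ = extLast σ₂ := by
      have := hperm
      rw [hc] at this
      exact mul_right_cancel this
    exact extLast_injective hext
  simp [hb, hε, hσ, hc]

lemma phiDes_bijective : Function.Bijective (PhiDes (n := n)) := by
  rw [Fintype.bijective_iff_injective_and_card]
  refine ⟨?_, card_eq⟩
  rintro ⟨⟨σ₁, ε₁⟩, ⟨p₁, b₁⟩⟩ ⟨⟨σ₂, ε₂⟩, ⟨p₂, b₂⟩⟩ h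
  rw [PhiDes, PhiDes, Prod.mk.injEq] at h
  obtain ⟨hperm, hsign⟩ := h
  have hp : p₁ = p₂ := by
    have h1 : insPerm σ₁ p₁ p₁ = insPerm σ₂ p₂ p₁ := by rw [hperm]
    rw [insPerm_self] at h1
    by_contra hne
    obtain ⟨j, hj⟩ := Fin.exists_succAbove_eq (hne : p₁ ≠ p₂)
    rw [← hj, insPerm_succAbove] at h1
    exact (Fin.castSucc_lt_last (σ₂ j)).ne h1.symm
  subst hp
  have hb : b₁ = b₂ := by
    have := congrFun hsign p₁
    simpa using this
  have hε : ε₁ = ε₂ := by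
    funext j
    have := congrFun hsign (p₁.succAbove j)
    simpa using this
  have hσ : σ₁ = σ₂ := by
    ext j
    have h1 : insPerm σ₁ p₁ (p₁.succAbove j) = insPerm σ₂ p₁ (p₁.succAbove j) := by rw [hperm]
    rw [insPerm_succAbove, insPerm_succAbove] at h1
    have := Fin.castSucc_injective n h1
    rw [this]
  simp [hb, hε, hσ]

lemma excRec (f : ℕ → ℕ → ℝ) :
    ∑ x : Bbig n, f (negB x.2) (excB x.1 x.2)
    = ∑ x : Equiv.Perm (Fin n) × (Fin n → Bool), Hfun f n (negB x.2) (excB x.1 x.2) := by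
  rw [← Function.Bijective.sum_comp phiExc_bijective (fun x => f (negB x.2) (excB x.1 x.2))]
  rw [Fintype.sum_prod_type]
  refine Finset.sum_congr rfl ?_
  rintro ⟨σ, ε⟩ -
  exact exc_inner f σ ε

lemma desRec (f : ℕ → ℕ → ℝ) :
    ∑ x : Bbig n, f (negB x.2) (desB x.1 x.2)
    = ∑ x : Equiv.Perm (Fin n) × (Fin n → Bool), Hfun f n (negB x.2) (desB x.1 x.2) := by
  rw [← Function.Bijective.sum_comp phiDes_bijective (fun x => f (negB x.2) (desB x.1 x.2))]
  rw [Fintype.sum_prod_type]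
  refine Finset.sum_congr rfl ?_
  rintro ⟨σ, ε⟩ -
  exact des_inner f σ ε

lemma key_equidistrib : ∀ (n : ℕ) (f : ℕ → ℕ → ℝ),
    ∑ x : Equiv.Perm (Fin n) × (Fin n → Bool), f (negB x.2) (desB x.1 x.2)
    = ∑ x : Equiv.Perm (Fin n) × (Fin n → Bool), f (negB x.2) (excB x.1 x.2) := by
  intro n
  induction n with
  | zero =>
    intro f
    refine Finset.sum_congr rfl ?_
    rintro ⟨σ, ε⟩ -
    have h1 : desB σ ε = 0 := by simp [desB]
    have h2 : excB σ ε = 0 := by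
      rw [excB]
      have : (univ : Finset (Fin 0)) = ∅ := by simp
      simp [this]
    rw [h1, h2]
  | succ m ih =>
    intro f
    rw [desRec f, excRec f, ih (fun s d => Hfun f m s d)]

end AuxEquid

theorem stmt16 (n : ℕ) (y t : ℝ) :
    ∑ σ : Equiv.Perm (Fin n) × (Fin n → Bool),
        y ^ negB σ.2 * t ^ desB σ.1 σ.2 =
      ∑ σ : Equiv.Perm (Fin n) × (Fin n → Bool),
        y ^ negB σ.2 * t ^ excB σ.1 σ.2 := by
  exact key_equidistrib n (fun s d => y ^ s * t ^ d)

end EulerExc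
end
end
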